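/- arXiv:2503.14117 — 8 statements merged into one kernel-verified Lean document; each statement's English description precedes it below -/
import Mathlib

section
/- Let N = 2^n. For every graph G ⊆ [N] × [N], D_∩(φ(G) | 𝓑_{2n}) ≥ D_∩(G | 𝓖_{N,N}); that is, the AND (intersection) complexity of the Boolean function associated with G is at least the intersection graph complexity of G. -/
open Set Filter

section Defs

variable {Γ : Type*}

/-- `StepOK 𝓑 seq ops` says that each set `seq i` in the sequence is obtained as the
union or intersection (according to `ops i`) of two sets, each of which is either a
generator in `𝓑` or an earlier set of the sequence. -/
def StepOK (𝓑 : Set (Set Γ)) {t : ℕ} (seq : Fin t → Set Γ) (ops : Fin t → Bool) : Prop :=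
  ∀ i : Fin t, ∃ X Y : Set Γ,
    (X ∈ 𝓑 ∨ ∃ j : Fin t, j < i ∧ X = seq j) ∧
    (Y ∈ 𝓑 ∨ ∃ j : Fin t, j < i ∧ Y = seq j) ∧
    seq i = if ops i = true then X ∩ Y else X ∪ Y

/-- The number of intersection operations used in the sequence. -/
def interCount {t : ℕ} (ops : Fin t → Bool) : ℕ :=
  (Finset.univ.filter fun i => ops i = true).card

/-- The number of union operations used in the sequence. -/
def unionCount {t : ℕ} (ops : Fin t → Bool) : ℕ :=
  (Finset.univ.filter fun i => ops i = false).card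

/-- The discrete complexity `D(A | 𝓑)`: the minimum length of a sequence generating
`A` from `𝓑` (`⊤` if none exists). -/
noncomputable def Dtot (A : Set Γ) (𝓑 : Set (Set Γ)) : ℕ∞ :=
  sInf {m : ℕ∞ | ∃ (t : ℕ) (seq : Fin (t + 1) → Set Γ) (ops : Fin (t + 1) → Bool),
    StepOK 𝓑 seq ops ∧ seq (Fin.last t) = A ∧ m = ((t + 1 : ℕ) : ℕ∞)}

/-- The intersection complexity `D_∩(A | 𝓑)`: the minimum number of intersection
operations over all sequences generating `A` from `𝓑`. -/
noncomputable def Dcap (A : Set Γ) (𝓑 : Set (Set Γ)) : ℕ∞ :=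
  sInf {m : ℕ∞ | ∃ (t : ℕ) (seq : Fin (t + 1) → Set Γ) (ops : Fin (t + 1) → Bool),
    StepOK 𝓑 seq ops ∧ seq (Fin.last t) = A ∧ m = ((interCount ops : ℕ) : ℕ∞)}

/-- The union complexity `D_∪(A | 𝓑)`. -/
noncomputable def Dcup (A : Set Γ) (𝓑 : Set (Set Γ)) : ℕ∞ :=
  sInf {m : ℕ∞ | ∃ (t : ℕ) (seq : Fin (t + 1) → Set Γ) (ops : Fin (t + 1) → Bool),
    StepOK 𝓑 seq ops ∧ seq (Fin.last t) = A ∧ m = ((unionCount ops : ℕ) : ℕ∞)}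

/-- Simultaneous discrete complexity `D(A_1, …, A_ℓ | 𝓑)` of generating every set in
the family `As` from `𝓑`. -/
noncomputable def DtotSim (As : Set (Set Γ)) (𝓑 : Set (Set Γ)) : ℕ∞ :=
  sInf {m : ℕ∞ | ∃ (t : ℕ) (seq : Fin (t + 1) → Set Γ) (ops : Fin (t + 1) → Bool),
    StepOK 𝓑 seq ops ∧ (∀ A ∈ As, ∃ i, seq i = A) ∧ m = ((t + 1 : ℕ) : ℕ∞)}

/-- Simultaneous intersection complexity. -/
noncomputable def DcapSim (As : Set (Set Γ)) (𝓑 : Set (Set Γ)) : ℕ∞ :=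
  sInf {m : ℕ∞ | ∃ (t : ℕ) (seq : Fin (t + 1) → Set Γ) (ops : Fin (t + 1) → Bool),
    StepOK 𝓑 seq ops ∧ (∀ A ∈ As, ∃ i, seq i = A) ∧ m = ((interCount ops : ℕ) : ℕ∞)}

/-- Simultaneous union complexity. -/
noncomputable def DcupSim (As : Set (Set Γ)) (𝓑 : Set (Set Γ)) : ℕ∞ :=
  sInf {m : ℕ∞ | ∃ (t : ℕ) (seq : Fin (t + 1) → Set Γ) (ops : Fin (t + 1) → Bool),
    StepOK 𝓑 seq ops ∧ (∀ A ∈ As, ∃ i, seq i = A) ∧ m = ((unionCount ops : ℕ) : ℕ∞)}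

/-- A semi-filter over `U`: a nonempty, upward-closed (within `U`) family of subsets
of `U` not containing `∅`. -/
def SemiFilter (U : Set Γ) (F : Set (Set Γ)) : Prop :=
  F.Nonempty ∧ (∀ S ∈ F, S ⊆ U) ∧
    (∀ S ∈ F, ∀ T : Set Γ, S ⊆ T → T ⊆ U → T ∈ F) ∧ ∅ ∉ F

/-- `F` is above the element `w` with respect to `𝓑` and `U`. -/
def Above (𝓑 : Set (Set Γ)) (U : Set Γ) (F : Set (Set Γ)) (w : Γ) : Prop :=
  ∀ B ∈ 𝓑, w ∈ B → B ∩ U ∈ F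

/-- `F` preserves the pair `p = (E, H)`. -/
def PreservesPair (F : Set (Set Γ)) (p : Set Γ × Set Γ) : Prop :=
  p.1 ∈ F → p.2 ∈ F → p.1 ∩ p.2 ∈ F

/-- `Λ` is a family of pairs of subsets of `U = Aᶜ` such that no semi-filter over `U`
both preserves `Λ` and is above some element of `A`. -/
def Covers (A : Set Γ) (𝓑 : Set (Set Γ)) (Λ : Finset (Set Γ × Set Γ)) : Prop :=
  (∀ p ∈ Λ, p.1 ⊆ Aᶜ ∧ p.2 ⊆ Aᶜ) ∧
    ¬∃ (F : Set (Set Γ)) (a : Γ), SemiFilter Aᶜ F ∧ a ∈ A ∧ Above 𝓑 Aᶜ F a ∧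
      ∀ p ∈ Λ, PreservesPair F p

/-- The cover complexity `ρ(A, 𝓑)`. -/
noncomputable def rho (A : Set Γ) (𝓑 : Set (Set Γ)) : ℕ∞ :=
  sInf {m : ℕ∞ | ∃ Λ : Finset (Set Γ × Set Γ), Covers A 𝓑 Λ ∧ m = ((Λ.card : ℕ) : ℕ∞)}

/-- A semi-ultra-filter over `U`: a semi-filter containing, for every `A' ⊆ U`, at
least one of `A'` and `U \ A'`. -/
def SemiUltraFilter (U : Set Γ) (F : Set (Set Γ)) : Prop :=
  SemiFilter U F ∧ ∀ A' : Set Γ, A' ⊆ U → (A' ∈ F ∨ U \ A' ∈ F)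

/-- The conondeterministic cover complexity `ρ_ultra(A, 𝓑)`. -/
noncomputable def rhoUltra (A : Set Γ) (𝓑 : Set (Set Γ)) : ℕ∞ :=
  sInf {m : ℕ∞ | ∃ Λ : Finset (Set Γ × Set Γ),
    (∀ p ∈ Λ, p.1 ⊆ Aᶜ ∧ p.2 ⊆ Aᶜ) ∧
    (¬∃ (F : Set (Set Γ)) (a : Γ), SemiUltraFilter Aᶜ F ∧ a ∈ A ∧ Above 𝓑 Aᶜ F a ∧
      ∀ p ∈ Λ, PreservesPair F p) ∧
    m = ((Λ.card : ℕ) : ℕ∞)}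

/-- One step of the evaluation of a syntactic (possibly cyclic) sequence: an argument
is either a reference to a member of the sequence or a fixed generator set. -/
def cycEval {t : ℕ} (arg1 arg2 : Fin t → Fin t ⊕ Set Γ) (ops : Fin t → Bool) :
    ℕ → Fin t → Set Γ
  | 0 => fun _ => ∅
  | j + 1 => fun i =>
      cycEval arg1 arg2 ops j i ∪
        (if ops i = true then
          Sum.elim (cycEval arg1 arg2 ops j) id (arg1 i) ∩
            Sum.elim (cycEval arg1 arg2 ops j) id (arg2 i)
        else
          Sum.elim (cycEval arg1 arg2 ops j) id (arg1 i) ∪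
            Sum.elim (cycEval arg1 arg2 ops j) id (arg2 i))

/-- The fixed set arguments of a syntactic sequence must be generators from `𝓑`. -/
def ArgsOK (𝓑 : Set (Set Γ)) {t : ℕ} (arg1 arg2 : Fin t → Fin t ⊕ Set Γ) : Prop :=
  ∀ i : Fin t, (∀ B : Set Γ, arg1 i = Sum.inr B → B ∈ 𝓑) ∧
    (∀ B : Set Γ, arg2 i = Sum.inr B → B ∈ 𝓑)

/-- The cyclic intersection complexity `D°_∩(A | 𝓑)`: the minimum number of
intersection operations over all syntactic sequences generating `A` from `𝓑`. -/
noncomputable def DcapCyc (A : Set Γ) (𝓑 : Set (Set Γ)) : ℕ∞ :=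
  sInf {m : ℕ∞ | ∃ (t : ℕ) (arg1 arg2 : Fin (t + 1) → Fin (t + 1) ⊕ Set Γ)
      (ops : Fin (t + 1) → Bool),
    ArgsOK 𝓑 arg1 arg2 ∧
    (∃ j : ℕ, ∀ j' ≥ j, cycEval arg1 arg2 ops j' (Fin.last t) = A) ∧
    m = ((interCount ops : ℕ) : ℕ∞)}

end Defs

/-- The row star `R_i ⊆ [N] × [M]`. -/
def rowSet (N M : ℕ) (i : Fin N) : Set (Fin N × Fin M) := {p | p.1 = i}

/-- The column star `C_j ⊆ [N] × [M]`. -/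
def colSet (N M : ℕ) (j : Fin M) : Set (Fin N × Fin M) := {p | p.2 = j}

/-- The generators `𝓖_{N,M}` of graph complexity: all row stars and column stars. -/
def graphGens (N M : ℕ) : Set (Set (Fin N × Fin M)) :=
  Set.range (rowSet N M) ∪ Set.range (colSet N M)

/-- The generators `𝓑_m` of Boolean circuit complexity over `{0,1}^m`:
all sets `B_i = {v : v_i = 1}` and their complements. -/
def cubeGens (m : ℕ) : Set (Set (Fin m → Bool)) :=
  {S | ∃ i : Fin m, S = {v | v i = true} ∨ S = {v | v i = false}}

/-- `bin : [N] → {0,1}^n` for `N = 2^n`: the element `k` (representing the integer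
`k + 1`) maps to the string `w` with `num(w) = k`, i.e. position `j` holds bit
`n - 1 - j` of `k`. -/
def binMap (n : ℕ) (k : Fin (2 ^ n)) : Fin n → Bool :=
  fun j => (k : ℕ).testBit (n - 1 - (j : ℕ))

/-- The bijection `φ : [N] × [N] → {0,1}^{2n}`, `φ(u, v) = bin(u)bin(v)`. -/
def phi (n : ℕ) (p : Fin (2 ^ n) × Fin (2 ^ n)) : Fin (2 * n) → Bool :=
  fun j =>
    if h : (j : ℕ) < n then binMap n p.1 ⟨(j : ℕ), h⟩
    else binMap n p.2 ⟨(j : ℕ) - n, by have := j.isLt; omega⟩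

/-- The canonical family `𝓕_e` for an edge `e = (u, v)` of a graph `G`:
all `W ⊆ Ḡ` containing `R_u ∩ Ḡ` or `C_v ∩ Ḡ`. -/
def canonFam (N : ℕ) (G : Set (Fin N × Fin N)) (e : Fin N × Fin N) :
    Set (Set (Fin N × Fin N)) :=
  {W | W ⊆ Gᶜ ∧ (rowSet N N e.1 ∩ Gᶜ ⊆ W ∨ colSet N N e.2 ∩ Gᶜ ⊆ W)}

/-- The canonical cover complexity `ρ_can(G, 𝓖_{N,N})`: the minimum size of a family
`Λ` of pairs of subsets of `Ḡ` such that every canonical semi-filter `𝓕_e`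
(for `e ∈ G`, when it is a semi-filter) fails to preserve some pair in `Λ`. -/
noncomputable def rhoCan (N : ℕ) (G : Set (Fin N × Fin N)) : ℕ∞ :=
  sInf {m : ℕ∞ | ∃ Λ : Finset (Set (Fin N × Fin N) × Set (Fin N × Fin N)),
    (∀ p ∈ Λ, p.1 ⊆ Gᶜ ∧ p.2 ⊆ Gᶜ) ∧
    (∀ e ∈ G, SemiFilter Gᶜ (canonFam N G e) →
      ∃ p ∈ Λ, ¬ PreservesPair (canonFam N G e) p) ∧
    m = ((Λ.card : ℕ) : ℕ∞)}

section Aux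

variable {Γ Δ : Type*}

/-- `Builds 𝓑 L k` : `L` is a valid generation sequence over generators `𝓑`,
using exactly `k` intersections. -/
inductive Builds (𝓑 : Set (Set Γ)) : List (Set Γ) → ℕ → Prop
  | nil : Builds 𝓑 [] 0
  | union {L k} {X Y : Set Γ} : Builds 𝓑 L k → (X ∈ 𝓑 ∨ X ∈ L) → (Y ∈ 𝓑 ∨ Y ∈ L) →
      Builds 𝓑 (L ++ [X ∪ Y]) k
  | inter {L k} {X Y : Set Γ} : Builds 𝓑 L k → (X ∈ 𝓑 ∨ X ∈ L) → (Y ∈ 𝓑 ∨ Y ∈ L) →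
      Builds 𝓑 (L ++ [X ∩ Y]) (k + 1)

lemma Builds.nil_eq {𝓑 : Set (Set Γ)} {L : List (Set Γ)} {k : ℕ}
    (h : Builds 𝓑 L k) (hL : L = []) : k = 0 := by
  induction h with
  | nil => rfl
  | union _ _ _ _ => simp at hL
  | inter _ _ _ _ => simp at hL

lemma Builds.append {𝓑 : Set (Set Γ)} {L M : List (Set Γ)} {k k' : ℕ}
    (hL : Builds 𝓑 L k) (hM : Builds 𝓑 M k') : Builds 𝓑 (L ++ M) (k + k') := by
  induction hM with
  | nil => simpa using hL
  | @union M' k' X Y h hX hY ih =>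
      rw [← List.append_assoc]
      exact Builds.union ih (hX.imp_right (List.mem_append_right _))
        (hY.imp_right (List.mem_append_right _))
  | @inter M' k' X Y h hX hY ih =>
      rw [← List.append_assoc, ← Nat.add_assoc]
      exact Builds.inter ih (hX.imp_right (List.mem_append_right _))
        (hY.imp_right (List.mem_append_right _))

lemma interCount_snoc {t : ℕ} (ops : Fin (t + 1) → Bool) (b : Bool) :
    interCount (Fin.snoc ops b : Fin (t + 2) → Bool)
      = interCount ops + (if b = true then 1 else 0) := by
  unfold interCount
  rw [Finset.card_filter, Finset.card_filter, Fin.sum_univ_castSucc]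
  simp

lemma interCount_one (ops : Fin 1 → Bool) :
    interCount ops = if ops 0 = true then 1 else 0 := by
  unfold interCount
  rw [Finset.card_filter, Fin.sum_univ_one]

lemma Builds.toSeq {𝓑 : Set (Set Γ)} {L : List (Set Γ)} {k : ℕ}
    (h : Builds 𝓑 L k) (hne : L ≠ []) :
    ∃ (t : ℕ) (seq : Fin (t + 1) → Set Γ) (ops : Fin (t + 1) → Bool),
      StepOK 𝓑 seq ops ∧ List.ofFn seq = L ∧ interCount ops = k := by
  induction h with
  | nil => exact absurd rfl hne
  | @union L k X Y hL hX hY ih =>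
      by_cases hnil : L = []
      · subst hnil
        have hk0 := hL.nil_eq rfl
        subst hk0
        simp only [List.mem_nil_iff, or_false] at hX hY
        refine ⟨0, fun _ => X ∪ Y, fun _ => false, ?_, by simp, by simp [interCount_one]⟩
        intro i
        exact ⟨X, Y, Or.inl hX, Or.inl hY, by simp⟩
      · obtain ⟨t, seq, ops, hstep, hofn, hcnt⟩ := ih hnil
        refine ⟨t + 1, Fin.snoc seq (X ∪ Y), Fin.snoc ops false, ?_, ?_, ?_⟩
        · intro i
          induction i using Fin.lastCases with
          | last =>
              have memconv : ∀ Z : Set Γ, (Z ∈ 𝓑 ∨ Z ∈ L) →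
                  (Z ∈ 𝓑 ∨ ∃ j : Fin (t + 2), j < Fin.last (t + 1) ∧
                    Z = (Fin.snoc seq (X ∪ Y) : Fin (t+2) → Set Γ) j) := by
                intro Z hZ
                rcases hZ with hZ | hZ
                · exact Or.inl hZ
                · rw [← hofn, List.mem_ofFn] at hZ
                  obtain ⟨j, hj⟩ := hZ
                  exact Or.inr ⟨j.castSucc, Fin.castSucc_lt_last j, by
                    rw [Fin.snoc_castSucc, hj]⟩
              exact ⟨X, Y, memconv X hX, memconv Y hY, by simp⟩
          | cast i =>
              obtain ⟨X', Y', hX', hY', heq⟩ := hstep i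
              have memconv : ∀ Z : Set Γ,
                  (Z ∈ 𝓑 ∨ ∃ j : Fin (t + 1), j < i ∧ Z = seq j) →
                  (Z ∈ 𝓑 ∨ ∃ j : Fin (t + 2), j < i.castSucc ∧
                    Z = (Fin.snoc seq (X ∪ Y) : Fin (t+2) → Set Γ) j) := by
                intro Z hZ
                rcases hZ with hZ | ⟨j, hji, hjz⟩
                · exact Or.inl hZ
                · exact Or.inr ⟨j.castSucc, by simpa using hji, by
                    rw [Fin.snoc_castSucc]; exact hjz⟩
              exact ⟨X', Y', memconv X' hX', memconv Y' hY', by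
                simpa [Fin.snoc_castSucc] using heq⟩
        · rw [List.ofFn_succ']
          simp only [Fin.snoc_castSucc, Fin.snoc_last, List.concat_eq_append, hofn]
        · rw [interCount_snoc, hcnt]; simp
  | @inter L k X Y hL hX hY ih =>
      by_cases hnil : L = []
      · subst hnil
        have hk0 := hL.nil_eq rfl
        subst hk0
        simp only [List.mem_nil_iff, or_false] at hX hY
        refine ⟨0, fun _ => X ∩ Y, fun _ => true, ?_, by simp, by simp [interCount_one]⟩
        intro i
        exact ⟨X, Y, Or.inl hX, Or.inl hY, by simp⟩
      · obtain ⟨t, seq, ops, hstep, hofn, hcnt⟩ := ih hnil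
        refine ⟨t + 1, Fin.snoc seq (X ∩ Y), Fin.snoc ops true, ?_, ?_, ?_⟩
        · intro i
          induction i using Fin.lastCases with
          | last =>
              have memconv : ∀ Z : Set Γ, (Z ∈ 𝓑 ∨ Z ∈ L) →
                  (Z ∈ 𝓑 ∨ ∃ j : Fin (t + 2), j < Fin.last (t + 1) ∧
                    Z = (Fin.snoc seq (X ∩ Y) : Fin (t+2) → Set Γ) j) := by
                intro Z hZ
                rcases hZ with hZ | hZ
                · exact Or.inl hZ
                · rw [← hofn, List.mem_ofFn] at hZ
                  obtain ⟨j, hj⟩ := hZ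
                  exact Or.inr ⟨j.castSucc, Fin.castSucc_lt_last j, by
                    rw [Fin.snoc_castSucc, hj]⟩
              exact ⟨X, Y, memconv X hX, memconv Y hY, by simp⟩
          | cast i =>
              obtain ⟨X', Y', hX', hY', heq⟩ := hstep i
              have memconv : ∀ Z : Set Γ,
                  (Z ∈ 𝓑 ∨ ∃ j : Fin (t + 1), j < i ∧ Z = seq j) →
                  (Z ∈ 𝓑 ∨ ∃ j : Fin (t + 2), j < i.castSucc ∧
                    Z = (Fin.snoc seq (X ∩ Y) : Fin (t+2) → Set Γ) j) := by
                intro Z hZ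
                rcases hZ with hZ | ⟨j, hji, hjz⟩
                · exact Or.inl hZ
                · exact Or.inr ⟨j.castSucc, by simpa using hji, by
                    rw [Fin.snoc_castSucc]; exact hjz⟩
              exact ⟨X', Y', memconv X' hX', memconv Y' hY', by
                simpa [Fin.snoc_castSucc] using heq⟩
        · rw [List.ofFn_succ']
          simp only [Fin.snoc_castSucc, Fin.snoc_last, List.concat_eq_append, hofn]
        · rw [interCount_snoc, hcnt]; simp

lemma stepOK_builds {𝓑 : Set (Set Γ)} :
    ∀ {t : ℕ} {seq : Fin (t + 1) → Set Γ} {ops : Fin (t + 1) → Bool},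
      StepOK 𝓑 seq ops → Builds 𝓑 (List.ofFn seq) (interCount ops) := by
  intro t
  induction t with
  | zero =>
      intro seq ops h
      obtain ⟨X, Y, hX, hY, heq⟩ := h 0
      have hX' : X ∈ 𝓑 := by
        rcases hX with hX | ⟨j, hj, _⟩
        · exact hX
        · exact absurd hj (by omega)
      have hY' : Y ∈ 𝓑 := by
        rcases hY with hY | ⟨j, hj, _⟩
        · exact hY
        · exact absurd hj (by omega)
      rw [interCount_one]
      cases hops : ops 0 with
      | true =>
          rw [hops] at heq; simp at heq
          have : List.ofFn seq = [] ++ [X ∩ Y] := by simp [heq, List.ofFn_succ]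
          rw [this]
          simpa using Builds.inter Builds.nil (Or.inl hX') (Or.inl hY')
      | false =>
          rw [hops] at heq; simp at heq
          have : List.ofFn seq = [] ++ [X ∪ Y] := by simp [heq, List.ofFn_succ]
          rw [this]
          simpa using Builds.union Builds.nil (Or.inl hX') (Or.inl hY')
  | succ t ih =>
      intro seq ops h
      have hstep' : StepOK 𝓑 (Fin.init seq) (Fin.init ops) := by
        intro i
        obtain ⟨X, Y, hX, hY, heq⟩ := h i.castSucc
        have memconv : ∀ Z : Set Γ,
            (Z ∈ 𝓑 ∨ ∃ j : Fin (t + 2), j < i.castSucc ∧ Z = seq j) →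
            (Z ∈ 𝓑 ∨ ∃ j : Fin (t + 1), j < i ∧ Z = Fin.init seq j) := by
          intro Z hZ
          rcases hZ with hZ | ⟨j, hji, hjz⟩
          · exact Or.inl hZ
          · have hjv : (j : ℕ) < (i : ℕ) := hji
            have hjt : (j : ℕ) < t + 1 := by omega
            have hcast : ((⟨(j : ℕ), hjt⟩ : Fin (t + 1))).castSucc = j := by
              ext; simp
            refine Or.inr ⟨⟨(j : ℕ), hjt⟩, by simpa [Fin.lt_def] using hjv, ?_⟩
            simp only [Fin.init]
            rw [hcast]
            exact hjz
        exact ⟨X, Y, memconv X hX, memconv Y hY, by exact heq⟩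
      have hb := ih hstep'
      obtain ⟨X, Y, hX, hY, heq⟩ := h (Fin.last (t + 1))
      have memconv : ∀ Z : Set Γ,
          (Z ∈ 𝓑 ∨ ∃ j : Fin (t + 2), j < Fin.last (t + 1) ∧ Z = seq j) →
          (Z ∈ 𝓑 ∨ Z ∈ List.ofFn (Fin.init seq)) := by
        intro Z hZ
        rcases hZ with hZ | ⟨j, hji, hjz⟩
        · exact Or.inl hZ
        · refine Or.inr ?_
          rw [List.mem_ofFn]
          have hjv : (j : ℕ) < t + 1 := hji
          refine ⟨⟨(j : ℕ), hjv⟩, ?_⟩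
          have hcast : ((⟨(j : ℕ), hjv⟩ : Fin (t + 1))).castSucc = j := by
            ext; simp
          simp only [Fin.init]
          rw [hcast]
          exact hjz.symm
      have hofn : List.ofFn seq = List.ofFn (Fin.init seq) ++ [seq (Fin.last (t + 1))] := by
        rw [List.ofFn_succ']
        simp [Fin.init]
      have hcnt : interCount ops
          = interCount (Fin.init ops) + (if ops (Fin.last (t + 1)) = true then 1 else 0) := by
        conv_lhs => rw [← Fin.snoc_init_self ops]
        rw [interCount_snoc]
      rw [hofn, hcnt]
      cases hops : ops (Fin.last (t + 1)) with
      | true =>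
          rw [hops] at heq; simp at heq
          rw [heq]
          simpa using Builds.inter hb (memconv X hX) (memconv Y hY)
      | false =>
          rw [hops] at heq; simp at heq
          rw [heq]
          simpa using Builds.union hb (memconv X hX) (memconv Y hY)

lemma dcap_le_of_builds {𝓑 : Set (Set Γ)} {L : List (Set Γ)} {k : ℕ} {A : Set Γ}
    (h : Builds 𝓑 L k) (hA : A ∈ L) : Dcap A 𝓑 ≤ (k : ℕ∞) := by
  have h2 : Builds 𝓑 (L ++ [A ∪ A]) k := h.union (Or.inr hA) (Or.inr hA)
  rw [Set.union_self] at h2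
  obtain ⟨t, seq, ops, hstep, hofn, hcnt⟩ := h2.toSeq (by simp)
  have hlen : L.length = t := by
    have := congrArg List.length hofn
    simp at this
    omega
  have hlast : seq (Fin.last t) = A := by
    have h2 : (List.ofFn seq)[t]? = some (seq (Fin.last t)) := by
      rw [List.getElem?_eq_getElem (by simp), List.getElem_ofFn]
      rfl
    have h3 : (L ++ [A])[t]? = some A := by rw [← hlen]; exact List.getElem?_concat_length
    rw [hofn, h3] at h2
    exact (Option.some.injEq _ _ ▸ h2).symm
  apply sInf_le
  exact ⟨t, seq, ops, hstep, hlast, by rw [hcnt]⟩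

lemma extend_arg {𝓑 : Set (Set Γ)} {𝓖 : Set (Set Δ)} {f : Δ → Γ}
    (H : ∀ B ∈ 𝓑, ∃ L₀ : List (Set Δ), Builds 𝓖 L₀ 0 ∧ f ⁻¹' B ∈ L₀)
    {L : List (Set Γ)} {L' : List (Set Δ)} {k : ℕ} (hL' : Builds 𝓖 L' k)
    (hmem : ∀ A ∈ L, f ⁻¹' A ∈ L') {X : Set Γ} (hX : X ∈ 𝓑 ∨ X ∈ L) :
    ∃ M, Builds 𝓖 (L' ++ M) k ∧ f ⁻¹' X ∈ L' ++ M := by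
  rcases hX with hX | hX
  · obtain ⟨L₀, h₀, hm⟩ := H X hX
    exact ⟨L₀, by simpa using hL'.append h₀, List.mem_append_right _ hm⟩
  · exact ⟨[], by simpa using hL', by simpa using hmem X hX⟩

lemma builds_preimage {𝓑 : Set (Set Γ)} {𝓖 : Set (Set Δ)} {f : Δ → Γ}
    (H : ∀ B ∈ 𝓑, ∃ L₀ : List (Set Δ), Builds 𝓖 L₀ 0 ∧ f ⁻¹' B ∈ L₀)
    {L : List (Set Γ)} {k : ℕ} (h : Builds 𝓑 L k) :
    ∃ L', Builds 𝓖 L' k ∧ ∀ A ∈ L, f ⁻¹' A ∈ L' := by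
  induction h with
  | nil => exact ⟨[], Builds.nil, by simp⟩
  | @union L k X Y hL hX hY ih =>
      obtain ⟨L', hL', hmem⟩ := ih
      obtain ⟨M₁, h₁, hx₁⟩ := extend_arg H hL' hmem hX
      have hmem₁ : ∀ A ∈ L, f ⁻¹' A ∈ L' ++ M₁ :=
        fun A hA => List.mem_append_left _ (hmem A hA)
      obtain ⟨M₂, h₂, hy₂⟩ := extend_arg H h₁ hmem₁ hY
      have hx₂ : f ⁻¹' X ∈ (L' ++ M₁) ++ M₂ := List.mem_append_left _ hx₁
      refine ⟨((L' ++ M₁) ++ M₂) ++ [f ⁻¹' X ∪ f ⁻¹' Y],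
        h₂.union (Or.inr hx₂) (Or.inr hy₂), ?_⟩
      intro A hA
      rcases List.mem_append.mp hA with hA | hA
      · exact List.mem_append_left _ (List.mem_append_left _
          (List.mem_append_left _ (hmem A hA)))
      · simp only [List.mem_singleton] at hA
        subst hA
        rw [Set.preimage_union]
        exact List.mem_append_right _ (by simp)
  | @inter L k X Y hL hX hY ih =>
      obtain ⟨L', hL', hmem⟩ := ih
      obtain ⟨M₁, h₁, hx₁⟩ := extend_arg H hL' hmem hX
      have hmem₁ : ∀ A ∈ L, f ⁻¹' A ∈ L' ++ M₁ :=
        fun A hA => List.mem_append_left _ (hmem A hA)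
      obtain ⟨M₂, h₂, hy₂⟩ := extend_arg H h₁ hmem₁ hY
      have hx₂ : f ⁻¹' X ∈ (L' ++ M₁) ++ M₂ := List.mem_append_left _ hx₁
      refine ⟨((L' ++ M₁) ++ M₂) ++ [f ⁻¹' X ∩ f ⁻¹' Y],
        h₂.inter (Or.inr hx₂) (Or.inr hy₂), ?_⟩
      intro A hA
      rcases List.mem_append.mp hA with hA | hA
      · exact List.mem_append_left _ (List.mem_append_left _
          (List.mem_append_left _ (hmem A hA)))
      · simp only [List.mem_singleton] at hA
        subst hA
        rw [Set.preimage_inter]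
        exact List.mem_append_right _ (by simp)

lemma builds_biUnion {𝓖 : Set (Set Δ)} {ι : Type*} {S : Finset ι} (hS : S.Nonempty)
    {g : ι → Set Δ} (hg : ∀ i ∈ S, g i ∈ 𝓖) :
    ∃ L₀, Builds 𝓖 L₀ 0 ∧ (⋃ i ∈ S, g i) ∈ L₀ := by
  revert hg
  induction hS using Finset.Nonempty.cons_induction with
  | singleton a =>
      intro hg
      refine ⟨[g a], ?_, ?_⟩
      · have := Builds.union (Builds.nil (𝓑 := 𝓖))
          (Or.inl (hg a (Finset.mem_singleton_self a)))
          (Or.inl (hg a (Finset.mem_singleton_self a)))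
        simpa using this
      · simp
  | cons a s ha hs ih =>
      intro hg
      obtain ⟨L₀, h₀, hm⟩ := ih (fun i hi => hg i (Finset.mem_cons_of_mem hi))
      refine ⟨L₀ ++ [g a ∪ ⋃ i ∈ s, g i], ?_, ?_⟩
      · exact h₀.union (Or.inl (hg a (Finset.mem_cons_self a s))) (Or.inr hm)
      · have : (⋃ i ∈ Finset.cons a s ha, g i) = g a ∪ ⋃ i ∈ s, g i := by
          simp
        rw [this]
        exact List.mem_append_right _ (by simp)

end Aux

lemma binMap_injective (n : ℕ) : Function.Injective (binMap n) := by
  intro k k' h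
  apply Fin.ext
  apply Nat.eq_of_testBit_eq
  intro i
  by_cases hi : i < n
  · have := congrFun h ⟨n - 1 - i, by omega⟩
    simpa [binMap, show n - 1 - (n - 1 - i) = i by omega] using this
  · have hk : (k : ℕ) < 2 ^ i :=
      lt_of_lt_of_le k.isLt (Nat.pow_le_pow_right (by norm_num) (by omega))
    have hk' : (k' : ℕ) < 2 ^ i :=
      lt_of_lt_of_le k'.isLt (Nat.pow_le_pow_right (by norm_num) (by omega))
    rw [Nat.testBit_lt_two_pow hk, Nat.testBit_lt_two_pow hk']

lemma phi_injective (n : ℕ) : Function.Injective (phi n) := by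
  intro p q h
  have h1 : p.1 = q.1 := by
    apply binMap_injective n
    funext j
    have := congrFun h ⟨(j : ℕ), by omega⟩
    simpa [phi, j.isLt] using this
  have h2 : p.2 = q.2 := by
    apply binMap_injective n
    funext j
    have := congrFun h ⟨(j : ℕ) + n, by omega⟩
    have hnot : ¬ ((j : ℕ) + n < n) := by omega
    simpa [phi, hnot] using this
  exact Prod.ext h1 h2

lemma exists_bit (n : ℕ) (r : ℕ) (hr : r < n) (b : Bool) :
    ∃ u : Fin (2 ^ n), (u : ℕ).testBit r = b := by
  cases b with
  | true =>
      refine ⟨⟨2 ^ r, Nat.pow_lt_pow_right (by norm_num) hr⟩, ?_⟩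
      simp [Nat.testBit_two_pow_self]
  | false =>
      exact ⟨⟨0, Nat.two_pow_pos n⟩, by simp⟩

lemma preimage_coord (n : ℕ) (j : Fin (2 * n)) (b : Bool) :
    ∃ L₀, Builds (graphGens (2 ^ n) (2 ^ n)) L₀ 0 ∧
      phi n ⁻¹' {v | v j = b} ∈ L₀ := by
  have hn : 0 < n := by have := j.isLt; omega
  by_cases hj : (j : ℕ) < n
  · have hrn : n - 1 - (j : ℕ) < n := by omega
    obtain ⟨u₀, hu₀⟩ := exists_bit n (n - 1 - (j : ℕ)) hrn b
    have hne : (Finset.univ.filter fun u : Fin (2 ^ n) =>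
        binMap n u ⟨(j : ℕ), hj⟩ = b).Nonempty := by
      refine ⟨u₀, ?_⟩
      simp only [Finset.mem_filter, Finset.mem_univ, true_and]
      simpa [binMap] using hu₀
    obtain ⟨L₀, hB, hm⟩ := builds_biUnion (𝓖 := graphGens (2 ^ n) (2 ^ n)) hne
      (g := rowSet (2 ^ n) (2 ^ n)) (fun u _ => Set.mem_union_left _ ⟨u, rfl⟩)
    refine ⟨L₀, hB, ?_⟩
    have heq : phi n ⁻¹' {v | v j = b}
        = ⋃ u ∈ (Finset.univ.filter fun u : Fin (2 ^ n) =>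
            binMap n u ⟨(j : ℕ), hj⟩ = b), rowSet (2 ^ n) (2 ^ n) u := by
      ext p
      simp only [Set.mem_preimage, Set.mem_setOf_eq, Set.mem_iUnion,
        Finset.mem_filter, Finset.mem_univ, true_and, rowSet]
      constructor
      · intro hp
        refine ⟨p.1, ?_, rfl⟩
        simpa [phi, hj] using hp
      · rintro ⟨u, hu, hpu⟩
        simp [phi, hj, hpu, hu]
    rw [heq]
    exact hm
  · have hjn : (j : ℕ) - n < n := by have := j.isLt; omega
    have hrn : n - 1 - ((j : ℕ) - n) < n := by omega
    obtain ⟨u₀, hu₀⟩ := exists_bit n (n - 1 - ((j : ℕ) - n)) hrn b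
    have hne : (Finset.univ.filter fun u : Fin (2 ^ n) =>
        binMap n u ⟨(j : ℕ) - n, hjn⟩ = b).Nonempty := by
      refine ⟨u₀, ?_⟩
      simp only [Finset.mem_filter, Finset.mem_univ, true_and]
      simpa [binMap] using hu₀
    obtain ⟨L₀, hB, hm⟩ := builds_biUnion (𝓖 := graphGens (2 ^ n) (2 ^ n)) hne
      (g := colSet (2 ^ n) (2 ^ n)) (fun u _ => Set.mem_union_right _ ⟨u, rfl⟩)
    refine ⟨L₀, hB, ?_⟩
    have heq : phi n ⁻¹' {v | v j = b}
        = ⋃ u ∈ (Finset.univ.filter fun u : Fin (2 ^ n) =>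
            binMap n u ⟨(j : ℕ) - n, hjn⟩ = b), colSet (2 ^ n) (2 ^ n) u := by
      ext p
      simp only [Set.mem_preimage, Set.mem_setOf_eq, Set.mem_iUnion,
        Finset.mem_filter, Finset.mem_univ, true_and, colSet]
      constructor
      · intro hp
        refine ⟨p.2, ?_, rfl⟩
        simpa [phi, hj] using hp
      · rintro ⟨u, hu, hpu⟩
        simp [phi, hj, hpu, hu]
    rw [heq]
    exact hm

lemma Hcube (n : ℕ) : ∀ B ∈ cubeGens (2 * n),
    ∃ L₀, Builds (graphGens (2 ^ n) (2 ^ n)) L₀ 0 ∧ phi n ⁻¹' B ∈ L₀ := by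
  rintro B ⟨j, hB | hB⟩ <;> subst hB
  · exact preimage_coord n j true
  · exact preimage_coord n j false

/-- Tight transference from graph complexity to circuit complexity:
for `N = 2^n` and every graph `G ⊆ [N] × [N]`,
`D_∩(φ(G) | 𝓑_{2n}) ≥ D_∩(G | 𝓖_{N,N})`. -/
theorem inter_transference (n : ℕ) (G : Set (Fin (2 ^ n) × Fin (2 ^ n))) :
    Dcap (phi n '' G) (cubeGens (2 * n)) ≥ Dcap G (graphGens (2 ^ n) (2 ^ n)) := by
  rw [ge_iff_le]
  refine le_sInf ?_
  rintro m ⟨t, seq, ops, hstep, hlast, rfl⟩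
  have hb : Builds (cubeGens (2 * n)) (List.ofFn seq) (interCount ops) :=
    stepOK_builds hstep
  obtain ⟨L', hL', hmem⟩ := builds_preimage (Hcube n) hb
  have hG : phi n ⁻¹' (phi n '' G) ∈ L' := by
    apply hmem
    rw [List.mem_ofFn]
    exact ⟨Fin.last t, hlast⟩
  rw [Set.preimage_image_eq G (phi_injective n)] at hG
  exact dcap_le_of_builds hL' hG
end

section
/- Let ⟨Γ₁, 𝓑₁⟩ and ⟨Γ₂, 𝓑₂⟩ be discrete spaces with 𝓑₂ = {B²_1, …, B²_m}, and let φ : Γ₁ → Γ₂ be an injective function. Then for every A₁ ⊆ Γ₁, D(A₁ | 𝓑₁) ≤ D(φ(A₁) | 𝓑₂) + D(φ^{−1}(B²_1), …, φ^{−1}(B²_m) | 𝓑₁) ≤ D(φ(A₁) | 𝓑₂) + Σ_{B ∈ 𝓑₂} D(φ^{−1}(B) | 𝓑₁), and the same inequalities hold with D replaced throughout by D_∩ (counting only intersection operations) or by D_∪ (counting only union operations). -/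
open Set Filter

section Aux
variable {Γ Γ₁ Γ₂ : Type*}

lemma my_enat_sInf_mem {S : Set ℕ∞} (h : S.Nonempty) : sInf S ∈ S := csInf_mem h

lemma my_sInf_add_le {S₁ S₂ S₃ : Set ℕ∞}
    (H : ∀ x ∈ S₂, ∀ y ∈ S₃, ∃ z ∈ S₁, z ≤ x + y) :
    sInf S₁ ≤ sInf S₂ + sInf S₃ := by
  rcases S₂.eq_empty_or_nonempty with h2 | h2
  · simp [h2]
  rcases S₃.eq_empty_or_nonempty with h3 | h3
  · simp [h3]
  obtain ⟨z, hz, hle⟩ := H _ (my_enat_sInf_mem h2) _ (my_enat_sInf_mem h3)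
  exact le_trans (sInf_le hz) hle

lemma my_last_eq (t₁ t₂ : ℕ) :
    Fin.last (t₁+1+t₂) = Fin.natAdd (t₁+1) (Fin.last t₂) := by
  ext; simp [Fin.natAdd]

lemma my_interCount_append {t₁ t₂ : ℕ} (o₁ : Fin (t₁+1) → Bool) (o₂ : Fin (t₂+1) → Bool) :
    interCount (Fin.append o₁ o₂) = interCount o₁ + interCount o₂ := by
  unfold interCount
  rw [Finset.card_filter, Finset.card_filter, Finset.card_filter, Fin.sum_univ_add]
  congr 1 <;> (apply Finset.sum_congr rfl; intros; simp)

lemma my_unionCount_append {t₁ t₂ : ℕ} (o₁ : Fin (t₁+1) → Bool) (o₂ : Fin (t₂+1) → Bool) :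
    unionCount (Fin.append o₁ o₂) = unionCount o₁ + unionCount o₂ := by
  unfold unionCount
  rw [Finset.card_filter, Finset.card_filter, Finset.card_filter, Fin.sum_univ_add]
  congr 1 <;> (apply Finset.sum_congr rfl; intros; simp)

lemma my_stepOK_append {𝓑 𝓑' : Set (Set Γ)} {t₁ t₂ : ℕ}
    {sA : Fin (t₁+1) → Set Γ} {oA : Fin (t₁+1) → Bool}
    {sB : Fin (t₂+1) → Set Γ} {oB : Fin (t₂+1) → Bool}
    (hA : StepOK 𝓑 sA oA) (hB : StepOK 𝓑' sB oB)
    (hsub : ∀ X ∈ 𝓑', X ∈ 𝓑 ∨ ∃ k, X = sA k) :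
    StepOK 𝓑 (Fin.append sA sB) (Fin.append oA oB) := by
  intro i
  induction i using Fin.addCases with
  | left j =>
    obtain ⟨X, Y, hX, hY, hstep⟩ := hA j
    refine ⟨X, Y, ?_, ?_, ?_⟩
    · rcases hX with h | ⟨j', hlt, rfl⟩
      · exact Or.inl h
      · refine Or.inr ⟨Fin.castAdd _ j', ?_, (Fin.append_left _ _ _).symm⟩
        have hlt' : (j' : ℕ) < (j : ℕ) := hlt
        rw [Fin.lt_def]; simpa using hlt'
    · rcases hY with h | ⟨j', hlt, rfl⟩
      · exact Or.inl h
      · refine Or.inr ⟨Fin.castAdd _ j', ?_, (Fin.append_left _ _ _).symm⟩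
        have hlt' : (j' : ℕ) < (j : ℕ) := hlt
        rw [Fin.lt_def]; simpa using hlt'
    · simpa [Fin.append_left] using hstep
  | right j =>
    obtain ⟨X, Y, hX, hY, hstep⟩ := hB j
    have mem : ∀ Z : Set Γ, (Z ∈ 𝓑' ∨ ∃ j' : Fin (t₂+1), j' < j ∧ Z = sB j') →
        (Z ∈ 𝓑 ∨ ∃ k : Fin (t₁+1+(t₂+1)), k < Fin.natAdd (t₁+1) j ∧
          Z = Fin.append sA sB k) := by
      rintro Z (h | ⟨j', hlt, rfl⟩)
      · rcases hsub Z h with h' | ⟨k, rfl⟩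
        · exact Or.inl h'
        · refine Or.inr ⟨Fin.castAdd _ k, ?_, (Fin.append_left _ _ _).symm⟩
          rw [Fin.lt_def]; simp only [Fin.coe_castAdd, Fin.coe_natAdd]; omega
      · refine Or.inr ⟨Fin.natAdd _ j', ?_, (Fin.append_right _ _ _).symm⟩
        have hlt' : (j' : ℕ) < (j : ℕ) := hlt
        rw [Fin.lt_def]; simp only [Fin.coe_natAdd]; omega
    exact ⟨X, Y, mem X hX, mem Y hY, by simpa [Fin.append_right] using hstep⟩

lemma my_stepOK_preimage (φ : Γ₁ → Γ₂) {𝓑 : Set (Set Γ₂)} {t : ℕ}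
    {s : Fin (t+1) → Set Γ₂} {o : Fin (t+1) → Bool} (h : StepOK 𝓑 s o) :
    StepOK ((fun B => φ ⁻¹' B) '' 𝓑) (fun i => φ ⁻¹' s i) o := by
  intro i
  obtain ⟨X, Y, hX, hY, hstep⟩ := h i
  refine ⟨φ ⁻¹' X, φ ⁻¹' Y, ?_, ?_, ?_⟩
  · rcases hX with h' | ⟨j, hj, rfl⟩
    · exact Or.inl ⟨X, h', rfl⟩
    · exact Or.inr ⟨j, hj, rfl⟩
  · rcases hY with h' | ⟨j, hj, rfl⟩
    · exact Or.inl ⟨Y, h', rfl⟩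
    · exact Or.inr ⟨j, hj, rfl⟩
  · show φ ⁻¹' s i = _
    rw [hstep]; split <;> simp

/-- generic complexity with measure `μ` -/
noncomputable def myD (μ : ∀ t : ℕ, (Fin (t+1) → Bool) → ℕ∞)
    (A : Set Γ) (𝓑 : Set (Set Γ)) : ℕ∞ :=
  sInf {m : ℕ∞ | ∃ (t : ℕ) (seq : Fin (t + 1) → Set Γ) (ops : Fin (t + 1) → Bool),
    StepOK 𝓑 seq ops ∧ seq (Fin.last t) = A ∧ m = μ t ops}

noncomputable def myDSim (μ : ∀ t : ℕ, (Fin (t+1) → Bool) → ℕ∞)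
    (As : Set (Set Γ)) (𝓑 : Set (Set Γ)) : ℕ∞ :=
  sInf {m : ℕ∞ | ∃ (t : ℕ) (seq : Fin (t + 1) → Set Γ) (ops : Fin (t + 1) → Bool),
    StepOK 𝓑 seq ops ∧ (∀ A ∈ As, ∃ i, seq i = A) ∧ m = μ t ops}

def myAdd (μ : ∀ t : ℕ, (Fin (t+1) → Bool) → ℕ∞) : Prop :=
  ∀ (t₁ t₂ : ℕ) (o₁ : Fin (t₁+1) → Bool) (o₂ : Fin (t₂+1) → Bool),
    μ (t₁+1+t₂) (Fin.append (m := t₁+1) (n := t₂+1) o₁ o₂) = μ t₁ o₁ + μ t₂ o₂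

lemma my_gen_le {μ} (hμ : myAdd μ) (𝓑₁ : Set (Set Γ₁)) (𝓑₂ : Set (Set Γ₂))
    (φ : Γ₁ → Γ₂) (hφ : Function.Injective φ) (A₁ : Set Γ₁) :
    myD μ A₁ 𝓑₁ ≤ myD μ (φ '' A₁) 𝓑₂ + myDSim μ ((fun B => φ ⁻¹' B) '' 𝓑₂) 𝓑₁ := by
  apply my_sInf_add_le
  rintro x ⟨t₂, s₂, o₂, hok₂, hlast, rfl⟩ y ⟨t₁, s₁, o₁, hok₁, hhit, rfl⟩
  refine ⟨μ (t₁+1+t₂) (Fin.append (m := t₁+1) (n := t₂+1) o₁ o₂),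
    ⟨t₁+1+t₂, Fin.append (m := t₁+1) (n := t₂+1) s₁ (fun i => φ ⁻¹' s₂ i),
      Fin.append (m := t₁+1) (n := t₂+1) o₁ o₂, ?_, ?_, rfl⟩, ?_⟩
  · refine my_stepOK_append hok₁ (my_stepOK_preimage φ hok₂) ?_
    rintro X ⟨B, hB, rfl⟩
    obtain ⟨i, hi⟩ := hhit _ ⟨B, hB, rfl⟩
    exact Or.inr ⟨i, hi.symm⟩
  · rw [my_last_eq]
    show (Fin.append s₁ (fun i => φ ⁻¹' s₂ i)) (Fin.natAdd (t₁+1) (Fin.last t₂)) = A₁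
    rw [Fin.append_right]
    show φ ⁻¹' s₂ (Fin.last t₂) = A₁
    rw [hlast, Set.preimage_image_eq _ hφ]
  · rw [hμ, add_comm]

lemma my_genSim_le_sum {μ} (hμ : myAdd μ) (𝓑₁ : Set (Set Γ₁))
    (f : Set Γ₂ → Set Γ₁) (s : Finset (Set Γ₂)) (hne : s.Nonempty) :
    myDSim μ (f '' (s : Set (Set Γ₂))) 𝓑₁ ≤ ∑ B ∈ s, myD μ (f B) 𝓑₁ := by
  induction hne using Finset.Nonempty.cons_induction with
  | singleton B =>
    rw [Finset.sum_singleton]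
    refine sInf_le_sInf ?_
    rintro m ⟨t, sq, o, hok, hlast, rfl⟩
    refine ⟨t, sq, o, hok, ?_, rfl⟩
    rintro A hA
    simp only [Finset.coe_singleton, Set.image_singleton, Set.mem_singleton_iff] at hA
    exact ⟨Fin.last t, hA ▸ hlast⟩
  | cons B s hB hne ih =>
    rw [Finset.sum_cons]
    refine le_trans ?_ (add_le_add_right ih _)
    apply my_sInf_add_le
    rintro x ⟨tB, sB, oB, hokB, hlastB, rfl⟩ y ⟨tS, sS, oS, hokS, hhit, rfl⟩
    refine ⟨μ (tB+1+tS) (Fin.append (m := tB+1) (n := tS+1) oB oS),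
      ⟨tB+1+tS, Fin.append (m := tB+1) (n := tS+1) sB sS,
        Fin.append (m := tB+1) (n := tS+1) oB oS,
        my_stepOK_append hokB hokS (fun X hX => Or.inl hX), ?_, rfl⟩, le_of_eq (hμ _ _ _ _)⟩
    rintro A hA
    simp only [Finset.coe_cons, Set.image_insert_eq, Set.mem_insert_iff] at hA
    rcases hA with rfl | hA
    · exact ⟨Fin.castAdd (tS+1) (Fin.last tB), by rw [Fin.append_left]; exact hlastB⟩
    · obtain ⟨i, hi⟩ := hhit _ hA
      exact ⟨Fin.natAdd (tB+1) i, by rw [Fin.append_right]; exact hi⟩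

lemma my_add_tot : myAdd (fun t _ => ((t + 1 : ℕ) : ℕ∞)) := by
  intro t₁ t₂ o₁ o₂
  push_cast
  ring

lemma my_add_cap : myAdd (fun t (o : Fin (t+1) → Bool) => ((interCount o : ℕ) : ℕ∞)) := by
  intro t₁ t₂ o₁ o₂
  rw [← Nat.cast_add]
  exact congrArg _ (my_interCount_append o₁ o₂)

lemma my_add_cup : myAdd (fun t (o : Fin (t+1) → Bool) => ((unionCount o : ℕ) : ℕ∞)) := by
  intro t₁ t₂ o₁ o₂
  rw [← Nat.cast_add]
  exact congrArg _ (my_unionCount_append o₁ o₂)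

end Aux

/-- Transference of lower bounds between discrete spaces: for
discrete spaces `⟨Γ₁, 𝓑₁⟩` and `⟨Γ₂, 𝓑₂⟩` and an injective `φ : Γ₁ → Γ₂`,
`D(A₁ | 𝓑₁) ≤ D(φ(A₁) | 𝓑₂) + D(φ⁻¹(B²_1), …, φ⁻¹(B²_m) | 𝓑₁)
  ≤ D(φ(A₁) | 𝓑₂) + Σ_{B ∈ 𝓑₂} D(φ⁻¹(B) | 𝓑₁)`,
and the same holds for `D_∩` and `D_∪`. -/
theorem transference_of_lower_bounds {Γ₁ Γ₂ : Type*}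
    [Fintype Γ₁] [Nonempty Γ₁] [Fintype Γ₂] [Nonempty Γ₂]
    (𝓑₁ : Set (Set Γ₁)) (𝓑₂ : Finset (Set Γ₂))
    (hsp₁ : ⋃₀ 𝓑₁ = Set.univ) (hsp₂ : ⋃₀ (𝓑₂ : Set (Set Γ₂)) = Set.univ)
    (φ : Γ₁ → Γ₂) (hφ : Function.Injective φ) (A₁ : Set Γ₁) :
    (Dtot A₁ 𝓑₁ ≤
        Dtot (φ '' A₁) ↑𝓑₂ + DtotSim ((fun B => φ ⁻¹' B) '' (𝓑₂ : Set (Set Γ₂))) 𝓑₁ ∧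
      Dtot (φ '' A₁) ↑𝓑₂ + DtotSim ((fun B => φ ⁻¹' B) '' (𝓑₂ : Set (Set Γ₂))) 𝓑₁ ≤
        Dtot (φ '' A₁) ↑𝓑₂ + ∑ B ∈ 𝓑₂, Dtot (φ ⁻¹' B) 𝓑₁) ∧
    (Dcap A₁ 𝓑₁ ≤
        Dcap (φ '' A₁) ↑𝓑₂ + DcapSim ((fun B => φ ⁻¹' B) '' (𝓑₂ : Set (Set Γ₂))) 𝓑₁ ∧
      Dcap (φ '' A₁) ↑𝓑₂ + DcapSim ((fun B => φ ⁻¹' B) '' (𝓑₂ : Set (Set Γ₂))) 𝓑₁ ≤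
        Dcap (φ '' A₁) ↑𝓑₂ + ∑ B ∈ 𝓑₂, Dcap (φ ⁻¹' B) 𝓑₁) ∧
    (Dcup A₁ 𝓑₁ ≤
        Dcup (φ '' A₁) ↑𝓑₂ + DcupSim ((fun B => φ ⁻¹' B) '' (𝓑₂ : Set (Set Γ₂))) 𝓑₁ ∧
      Dcup (φ '' A₁) ↑𝓑₂ + DcupSim ((fun B => φ ⁻¹' B) '' (𝓑₂ : Set (Set Γ₂))) 𝓑₁ ≤
        Dcup (φ '' A₁) ↑𝓑₂ + ∑ B ∈ 𝓑₂, Dcup (φ ⁻¹' B) 𝓑₁) := by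
  have hne : 𝓑₂.Nonempty := by
    rcases Set.eq_univ_iff_forall.mp hsp₂ (Classical.arbitrary Γ₂) with ⟨B, hB, _⟩
    exact ⟨B, hB⟩
  refine ⟨⟨?_, ?_⟩, ⟨?_, ?_⟩, ⟨?_, ?_⟩⟩
  · exact my_gen_le my_add_tot 𝓑₁ ↑𝓑₂ φ hφ A₁
  · exact add_le_add_right (my_genSim_le_sum my_add_tot 𝓑₁ _ 𝓑₂ hne) _
  · exact my_gen_le my_add_cap 𝓑₁ ↑𝓑₂ φ hφ A₁
  · exact add_le_add_right (my_genSim_le_sum my_add_cap 𝓑₁ _ 𝓑₂ hne) _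
  · exact my_gen_le my_add_cup 𝓑₁ ↑𝓑₂ φ hφ A₁
  · exact add_le_add_right (my_genSim_le_sum my_add_cup 𝓑₁ _ 𝓑₂ hne) _
end

section
/- Let I_1, …, I_t together with fixed operations I_i = K_{i₁} ⋆_i K_{i₂} be a syntactic sequence over a family 𝓑 of subsets of a finite ground set Γ. Then for every j ≥ t and every i ∈ [t], I_i^{j+1} = I_i^j; that is, the evaluation of the syntactic sequence converges after at most t steps. -/
open Set Filter

lemma cycEval_mono {Γ : Type*} {t : ℕ} (arg1 arg2 : Fin t → Fin t ⊕ Set Γ)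
    (ops : Fin t → Bool) (j : ℕ) (i : Fin t) :
    cycEval arg1 arg2 ops j i ⊆ cycEval arg1 arg2 ops (j + 1) i := by
  show cycEval arg1 arg2 ops j i ⊆ cycEval arg1 arg2 ops j i ∪ _
  exact Set.subset_union_left

lemma cycEval_step_congr {Γ : Type*} {t : ℕ} (arg1 arg2 : Fin t → Fin t ⊕ Set Γ)
    (ops : Fin t → Bool) (x : Γ) (j k : ℕ)
    (h : ∀ i, x ∈ cycEval arg1 arg2 ops j i ↔ x ∈ cycEval arg1 arg2 ops k i) :
    ∀ i, x ∈ cycEval arg1 arg2 ops (j + 1) i ↔ x ∈ cycEval arg1 arg2 ops (k + 1) i := by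
  intro i
  have harg : ∀ a : Fin t ⊕ Set Γ,
      (x ∈ Sum.elim (cycEval arg1 arg2 ops j) id a ↔
        x ∈ Sum.elim (cycEval arg1 arg2 ops k) id a) := by
    rintro (i' | B)
    · simpa using h i'
    · simp
  show x ∈ cycEval arg1 arg2 ops j i ∪ _ ↔ x ∈ cycEval arg1 arg2 ops k i ∪ _
  by_cases hop : ops i = true <;>
    simp [hop, Set.mem_union, Set.mem_inter_iff, h i, harg (arg1 i), harg (arg2 i)]

/-- Convergence of the evaluation procedure: the evaluation of a
syntactic sequence of length `t` converges after at most `t` steps: for every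
`j ≥ t` and every `i`, `I_i^{j+1} = I_i^j`. -/
theorem syntactic_sequence_convergence {Γ : Type*} [Fintype Γ] [Nonempty Γ]
    (𝓑 : Set (Set Γ)) {t : ℕ} (arg1 arg2 : Fin t → Fin t ⊕ Set Γ)
    (ops : Fin t → Bool) (hargs : ArgsOK 𝓑 arg1 arg2) :
    ∀ j ≥ t, ∀ i : Fin t,
      cycEval arg1 arg2 ops (j + 1) i = cycEval arg1 arg2 ops j i := by
  classical
  intro j hj i
  ext x
  set s : ℕ → Finset (Fin t) :=
    fun m => Finset.univ.filter (fun i => x ∈ cycEval arg1 arg2 ops m i) with hs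
  have hmono : ∀ m, s m ⊆ s (m + 1) := by
    intro m i hi
    simp only [hs, Finset.mem_filter, Finset.mem_univ, true_and] at hi ⊢
    exact cycEval_mono arg1 arg2 ops m i hi
  have hiff : ∀ m, s m = s (m + 1) ↔
      ∀ i, (x ∈ cycEval arg1 arg2 ops m i ↔ x ∈ cycEval arg1 arg2 ops (m + 1) i) := by
    intro m
    simp [hs, Finset.ext_iff]
  have hstab : ∃ k ≤ t, s k = s (k + 1) := by
    by_contra hcon
    push_neg at hcon
    have hcard : ∀ m ≤ t + 1, m ≤ (s m).card := by
      intro m hm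
      induction m with
      | zero => exact Nat.zero_le _
      | succ n ih =>
        have h1 : n ≤ (s n).card := ih (by omega)
        have h2 : s n ⊂ s (n + 1) :=
          (Finset.ssubset_iff_subset_ne).2 ⟨hmono n, hcon n (by omega)⟩
        have := Finset.card_lt_card h2
        omega
    have h1 : t + 1 ≤ (s (t + 1)).card := hcard (t + 1) le_rfl
    have h2 : (s (t + 1)).card ≤ t := by
      simpa using Finset.card_le_card (Finset.subset_univ (s (t + 1)))
    omega
  obtain ⟨k, hk, hkeq⟩ := hstab
  have hprop : ∀ m ≥ k, s m = s (m + 1) := by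
    intro m hm
    induction m with
    | zero =>
      have : k = 0 := Nat.le_zero.mp hm
      simpa [this] using hkeq
    | succ n ih =>
      rcases Nat.lt_or_ge k (n + 1) with h | h
      · have hn := ih (by omega)
        exact (hiff (n + 1)).2
          (cycEval_step_congr arg1 arg2 ops x n (n + 1) ((hiff n).1 hn))
      · have : k = n + 1 := by omega
        simpa [this] using hkeq
    -- done
  have hfix := (hiff j).1 (hprop j (le_trans hk hj))
  exact ⟨fun h => (hfix i).2 h, fun h => (hfix i).1 h⟩
end

section
/- Let Γ be a nonempty finite set, let 𝓑 be a family of subsets of Γ with Γ = ∪_{B ∈ 𝓑} B, and let A ⊆ Γ be non-trivial. Then D(A | 𝓑) is finite if and only if there do not exist elements a ∈ A and b ∈ Γ ∖ A such that every generator B ∈ 𝓑 containing a also contains b. -/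
open Set Filter

namespace FinTest

variable {Γ : Type*}

/-- Inductive closure of `𝓑` under binary unions and intersections. -/
inductive Gen (𝓑 : Set (Set Γ)) : Set Γ → Prop
  | base : ∀ B ∈ 𝓑, Gen 𝓑 B
  | inter : ∀ {X Y : Set Γ}, Gen 𝓑 X → Gen 𝓑 Y → Gen 𝓑 (X ∩ Y)
  | union : ∀ {X Y : Set Γ}, Gen 𝓑 X → Gen 𝓑 Y → Gen 𝓑 (X ∪ Y)

def GoodList (𝓑 : Set (Set Γ)) (L : List (Set Γ)) : Prop :=
  ∀ i (hi : i < L.length), ∃ (b : Bool) (X Y : Set Γ),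
    (X ∈ 𝓑 ∨ ∃ j, ∃ hj : j < i, X = L[j]'(hj.trans hi)) ∧
    (Y ∈ 𝓑 ∨ ∃ j, ∃ hj : j < i, Y = L[j]'(hj.trans hi)) ∧
    L[i]'hi = if b then X ∩ Y else X ∪ Y

lemma GoodList.append {𝓑 : Set (Set Γ)} {L₁ L₂ : List (Set Γ)}
    (h₁ : GoodList 𝓑 L₁) (h₂ : GoodList 𝓑 L₂) : GoodList 𝓑 (L₁ ++ L₂) := by
  intro i hi
  have hlen : (L₁ ++ L₂).length = L₁.length + L₂.length := List.length_append
  by_cases hlt : i < L₁.length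
  · obtain ⟨b, X, Y, hX, hY, heq⟩ := h₁ i hlt
    refine ⟨b, X, Y, ?_, ?_, ?_⟩
    · rcases hX with h | ⟨j, hj, rfl⟩
      · exact Or.inl h
      · exact Or.inr ⟨j, hj, (List.getElem_append_left (hj.trans hlt)).symm⟩
    · rcases hY with h | ⟨j, hj, rfl⟩
      · exact Or.inl h
      · exact Or.inr ⟨j, hj, (List.getElem_append_left (hj.trans hlt)).symm⟩
    · rw [List.getElem_append_left hlt]; exact heq
  · push_neg at hlt
    have hk : i - L₁.length < L₂.length := by omega
    obtain ⟨b, X, Y, hX, hY, heq⟩ := h₂ (i - L₁.length) hk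
    refine ⟨b, X, Y, ?_, ?_, ?_⟩
    · rcases hX with h | ⟨j, hj, rfl⟩
      · exact Or.inl h
      · refine Or.inr ⟨L₁.length + j, by omega, ?_⟩
        rw [List.getElem_append_right (by omega)]
        congr 1; omega
    · rcases hY with h | ⟨j, hj, rfl⟩
      · exact Or.inl h
      · refine Or.inr ⟨L₁.length + j, by omega, ?_⟩
        rw [List.getElem_append_right (by omega)]
        congr 1; omega
    · rw [List.getElem_append_right hlt]; exact heq

lemma GoodList.snoc {𝓑 : Set (Set Γ)} {L : List (Set Γ)} (h : GoodList 𝓑 L)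
    (b : Bool) {X Y Z : Set Γ}
    (hX : X ∈ 𝓑 ∨ ∃ j, ∃ hj : j < L.length, X = L[j])
    (hY : Y ∈ 𝓑 ∨ ∃ j, ∃ hj : j < L.length, Y = L[j])
    (hZ : Z = if b then X ∩ Y else X ∪ Y) :
    GoodList 𝓑 (L ++ [Z]) := by
  intro i hi
  have hlen : (L ++ [Z]).length = L.length + 1 := by
    simp only [List.length_append, List.length_singleton]
  by_cases hlt : i < L.length
  · obtain ⟨b', X', Y', hX', hY', heq⟩ := h i hlt
    refine ⟨b', X', Y', ?_, ?_, ?_⟩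
    · rcases hX' with h' | ⟨j, hj, rfl⟩
      · exact Or.inl h'
      · exact Or.inr ⟨j, hj, (List.getElem_append_left (hj.trans hlt)).symm⟩
    · rcases hY' with h' | ⟨j, hj, rfl⟩
      · exact Or.inl h'
      · exact Or.inr ⟨j, hj, (List.getElem_append_left (hj.trans hlt)).symm⟩
    · rw [List.getElem_append_left hlt]; exact heq
  · have hieq : i = L.length := by omega
    refine ⟨b, X, Y, ?_, ?_, ?_⟩
    · rcases hX with h' | ⟨j, hj, rfl⟩
      · exact Or.inl h'
      · exact Or.inr ⟨j, by omega, (List.getElem_append_left hj).symm⟩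
    · rcases hY with h' | ⟨j, hj, rfl⟩
      · exact Or.inl h'
      · exact Or.inr ⟨j, by omega, (List.getElem_append_left hj).symm⟩
    · rw [List.getElem_concat_length hieq]; exact hZ

lemma Gen.toList {𝓑 : Set (Set Γ)} {A : Set Γ} (h : Gen 𝓑 A) :
    ∃ L : List (Set Γ), GoodList 𝓑 L ∧ ∃ _ : 0 < L.length,
      L[L.length - 1]'(by omega) = A := by
  induction h with
  | base B hB =>
      refine ⟨[B], ?_, by simp, by simp⟩
      intro i hi
      have hi1 : i < 1 := by simpa using hi
      have : i = 0 := by omega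
      subst this
      exact ⟨false, B, B, Or.inl hB, Or.inl hB, by simp⟩
  | @inter X Y _ _ ihX ihY =>
      obtain ⟨L₁, g₁, hl₁, e₁⟩ := ihX
      obtain ⟨L₂, g₂, hl₂, e₂⟩ := ihY
      have key := (g₁.append g₂).snoc true (X := X) (Y := Y) (Z := X ∩ Y)
        (Or.inr ⟨L₁.length - 1,
          ⟨by simp only [List.length_append]; omega, by
            rw [List.getElem_append_left (by omega)]; exact e₁.symm⟩⟩)
        (Or.inr ⟨L₁.length + L₂.length - 1,
          ⟨by simp only [List.length_append]; omega, by
            rw [List.getElem_append_right (by omega)]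
            refine e₂.symm.trans ?_
            congr 1; omega⟩⟩)
        (by simp)
      refine ⟨L₁ ++ L₂ ++ [X ∩ Y], key,
        by simp only [List.length_append, List.length_singleton]; omega, ?_⟩
      exact List.getElem_concat_length
        (by simp only [List.length_append, List.length_singleton]; omega) _
  | @union X Y _ _ ihX ihY =>
      obtain ⟨L₁, g₁, hl₁, e₁⟩ := ihX
      obtain ⟨L₂, g₂, hl₂, e₂⟩ := ihY
      have key := (g₁.append g₂).snoc false (X := X) (Y := Y) (Z := X ∪ Y)
        (Or.inr ⟨L₁.length - 1,
          ⟨by simp only [List.length_append]; omega, by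
            rw [List.getElem_append_left (by omega)]; exact e₁.symm⟩⟩)
        (Or.inr ⟨L₁.length + L₂.length - 1,
          ⟨by simp only [List.length_append]; omega, by
            rw [List.getElem_append_right (by omega)]
            refine e₂.symm.trans ?_
            congr 1; omega⟩⟩)
        (by simp)
      refine ⟨L₁ ++ L₂ ++ [X ∪ Y], key,
        by simp only [List.length_append, List.length_singleton]; omega, ?_⟩
      exact List.getElem_concat_length
        (by simp only [List.length_append, List.length_singleton]; omega) _

lemma gen_of_stepOK {𝓑 : Set (Set Γ)} {t : ℕ} {seq : Fin t → Set Γ} {ops : Fin t → Bool}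
    (hstep : StepOK 𝓑 seq ops) : ∀ i, Gen 𝓑 (seq i) := by
  have key : ∀ n (i : Fin t), (i : ℕ) = n → Gen 𝓑 (seq i) := by
    intro n
    induction n using Nat.strong_induction_on with
    | _ n ih =>
      intro i hi
      obtain ⟨X, Y, hX, hY, heq⟩ := hstep i
      have gX : Gen 𝓑 X := by
        rcases hX with h | ⟨j, hj, rfl⟩
        · exact Gen.base X h
        · exact ih j (by rw [← hi]; exact hj) j rfl
      have gY : Gen 𝓑 Y := by
        rcases hY with h | ⟨j, hj, rfl⟩
        · exact Gen.base Y h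
        · exact ih j (by rw [← hi]; exact hj) j rfl
      cases hop : ops i
      · rw [heq, hop]
        simpa using gX.union gY
      · rw [heq, hop]
        simpa using gX.inter gY
  exact fun i => key i i rfl

lemma gen_invariant {𝓑 : Set (Set Γ)} {S : Set Γ} {a b : Γ}
    (hab : ∀ B ∈ 𝓑, a ∈ B → b ∈ B) (h : Gen 𝓑 S) : a ∈ S → b ∈ S := by
  induction h with
  | base B hB => exact hab B hB
  | inter _ _ ihX ihY => intro ⟨h1, h2⟩; exact ⟨ihX h1, ihY h2⟩
  | union _ _ ihX ihY => rintro (h1 | h2); exacts [Or.inl (ihX h1), Or.inr (ihY h2)]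

lemma dtot_ne_top_of_gen {𝓑 : Set (Set Γ)} {A : Set Γ} (h : Gen 𝓑 A) :
    Dtot A 𝓑 ≠ ⊤ := by
  obtain ⟨L, good, hL, hlast⟩ := h.toList
  obtain ⟨t, ht⟩ : ∃ t, L.length = t + 1 := ⟨L.length - 1, by omega⟩
  set seq : Fin (t + 1) → Set Γ := fun i => L[(i : ℕ)]'(by rw [ht]; exact i.isLt) with hseq
  have hch : ∀ i : Fin (t + 1), ∃ (b : Bool) (X Y : Set Γ),
      (X ∈ 𝓑 ∨ ∃ j : Fin (t + 1), j < i ∧ X = seq j) ∧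
      (Y ∈ 𝓑 ∨ ∃ j : Fin (t + 1), j < i ∧ Y = seq j) ∧
      seq i = if b then X ∩ Y else X ∪ Y := by
    intro i
    obtain ⟨b, X, Y, hX, hY, heq⟩ := good (i : ℕ) (by rw [ht]; exact i.isLt)
    refine ⟨b, X, Y, ?_, ?_, heq⟩
    · rcases hX with h' | ⟨j, hj, rfl⟩
      · exact Or.inl h'
      · exact Or.inr ⟨⟨j, by omega⟩, by simpa [Fin.lt_def] using hj, rfl⟩
    · rcases hY with h' | ⟨j, hj, rfl⟩
      · exact Or.inl h'
      · exact Or.inr ⟨⟨j, by omega⟩, by simpa [Fin.lt_def] using hj, rfl⟩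
  choose ops X Y hX hY heq using hch
  have hmem : ((t + 1 : ℕ) : ℕ∞) ∈ {m : ℕ∞ | ∃ (t : ℕ) (seq : Fin (t + 1) → Set Γ)
      (ops : Fin (t + 1) → Bool), StepOK 𝓑 seq ops ∧ seq (Fin.last t) = A ∧
      m = ((t + 1 : ℕ) : ℕ∞)} := by
    refine ⟨t, seq, ops, fun i => ⟨X i, Y i, hX i, hY i, heq i⟩, ?_, rfl⟩
    show L[((Fin.last t : Fin (t+1)) : ℕ)]'_ = A
    refine Eq.trans ?_ hlast
    congr 1
    simp [Fin.last]; omega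
  have hle : Dtot A 𝓑 ≤ ((t + 1 : ℕ) : ℕ∞) := sInf_le hmem
  exact ne_top_of_le_ne_top (WithTop.coe_ne_top) hle

lemma gen_biUnion {ι : Type*} {𝓑 : Set (Set Γ)} {f : ι → Set Γ} {s : Finset ι}
    (hs : s.Nonempty) (h : ∀ i ∈ s, Gen 𝓑 (f i)) : Gen 𝓑 (⋃ i ∈ s, f i) := by
  classical
  induction hs using Finset.Nonempty.cons_induction with
  | singleton a => simpa using h a (by simp)
  | cons a s ha hs ih =>
      rw [Finset.cons_eq_insert, Finset.set_biUnion_insert]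
      exact (h a (by simp)).union (ih fun i hi => h i (by simp [hi]))

lemma gen_biInter {ι : Type*} {𝓑 : Set (Set Γ)} {f : ι → Set Γ} {s : Finset ι}
    (hs : s.Nonempty) (h : ∀ i ∈ s, Gen 𝓑 (f i)) : Gen 𝓑 (⋂ i ∈ s, f i) := by
  classical
  induction hs using Finset.Nonempty.cons_induction with
  | singleton a => simpa using h a (by simp)
  | cons a s ha hs ih =>
      rw [Finset.cons_eq_insert, Finset.set_biInter_insert]
      exact (h a (by simp)).inter (ih fun i hi => h i (by simp [hi]))

end FinTest

/-- Finiteness test: for a nonempty finite ground set `Γ`, a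
family `𝓑` with `Γ = ⋃ 𝓑`, and a non-trivial `A ⊆ Γ`, `D(A | 𝓑)` is finite if and
only if there are no `a ∈ A` and `b ∈ Γ ∖ A` such that every generator containing
`a` also contains `b`. -/
theorem finiteness_test {Γ : Type*} [Fintype Γ] [Nonempty Γ]
    (𝓑 : Set (Set Γ)) (hsp : ⋃₀ 𝓑 = Set.univ)
    (A : Set Γ) (hA₁ : A ≠ ∅) (hA₂ : A ≠ Set.univ) :
    Dtot A 𝓑 ≠ ⊤ ↔ ¬∃ a ∈ A, ∃ b ∈ Aᶜ, ∀ B ∈ 𝓑, a ∈ B → b ∈ B := by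
  
  classical
  constructor
  · rintro hfin ⟨a, ha, b, hb, hab⟩
    have h2 : ¬ ∀ m ∈ {m : ℕ∞ | ∃ (t : ℕ) (seq : Fin (t + 1) → Set Γ)
        (ops : Fin (t + 1) → Bool), StepOK 𝓑 seq ops ∧ seq (Fin.last t) = A ∧
        m = ((t + 1 : ℕ) : ℕ∞)}, m = ⊤ := by
      rw [← sInf_eq_top]; exact hfin
    push_neg at h2
    obtain ⟨m, ⟨t, seq, ops, hstep, hlast, rfl⟩, -⟩ := h2
    have key := FinTest.gen_invariant hab (FinTest.gen_of_stepOK hstep (Fin.last t))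
    rw [hlast] at key
    exact hb (key ha)
  · intro h
    push_neg at h
    have hBne : 𝓑.Nonempty := by
      by_contra hB
      rw [Set.not_nonempty_iff_eq_empty] at hB
      rw [hB, Set.sUnion_empty] at hsp
      exact Set.empty_ne_univ hsp
    obtain ⟨B₀, hB₀⟩ := hBne
    have h' : ∀ a b : Γ, ∃ B, B ∈ 𝓑 ∧ (a ∈ A → b ∈ Aᶜ → a ∈ B ∧ b ∉ B) := by
      intro a b
      by_cases ha : a ∈ A
      · by_cases hb : b ∈ Aᶜ
        · obtain ⟨B, hB, h1, h2⟩ := h a ha b hb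
          exact ⟨B, hB, fun _ _ => ⟨h1, h2⟩⟩
        · exact ⟨B₀, hB₀, fun _ hb' => absurd hb' hb⟩
      · exact ⟨B₀, hB₀, fun ha' => absurd ha' ha⟩
    choose f hf1 hf2 using h'
    have hAne : (Set.toFinite A).toFinset.Nonempty := by
      rw [Set.Finite.toFinset_nonempty]
      exact Set.nonempty_iff_ne_empty.mpr hA₁
    have hAcne : (Set.toFinite Aᶜ).toFinset.Nonempty := by
      rw [Set.Finite.toFinset_nonempty]
      exact Set.nonempty_compl.mpr hA₂
    have hA : A = ⋃ a ∈ (Set.toFinite A).toFinset,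
        ⋂ b ∈ (Set.toFinite Aᶜ).toFinset, f a b := by
      ext x
      simp only [Set.mem_iUnion, Set.mem_iInter, Set.Finite.mem_toFinset]
      constructor
      · intro hx
        exact ⟨x, hx, fun b hb => (hf2 x b hx hb).1⟩
      · rintro ⟨a, ha, hall⟩
        by_contra hx
        exact (hf2 a x ha hx).2 (hall x hx)
    apply FinTest.dtot_ne_top_of_gen
    rw [hA]
    exact FinTest.gen_biUnion hAne fun a _ =>
      FinTest.gen_biInter hAcne fun b _ => FinTest.Gen.base _ (hf1 a b)
end

section
/- Let Γ be a nonempty finite set with |Γ| = k, let 𝓑 be a family of subsets of Γ with |𝓑| = m, and let s ∈ ℕ⁺. If 3 · s · ⌈log₂(m + s)⌉ < k, then there exists a set A ⊆ Γ such that D(A | 𝓑) ≥ s. -/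
open Set Filter

section Aux

variable {Γ : Type*}

def decFuel (𝓑 : Finset (Set Γ)) (T : ℕ)
    (e : Fin T → Bool × ({B // B ∈ 𝓑} ⊕ Fin T) × ({B // B ∈ 𝓑} ⊕ Fin T)) :
    ℕ → ℕ → Set Γ
  | 0, _ => ∅
  | n+1, i =>
    if h : i < T then
      let v : {B // B ∈ 𝓑} ⊕ Fin T → Set Γ :=
        Sum.elim (fun B => B.val) (fun j => if (j : ℕ) < i then decFuel 𝓑 T e n j else ∅)
      if (e ⟨i, h⟩).1 then v (e ⟨i, h⟩).2.1 ∩ v (e ⟨i, h⟩).2.2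
      else v (e ⟨i, h⟩).2.1 ∪ v (e ⟨i, h⟩).2.2
    else ∅

lemma decFuel_encode (𝓑 : Finset (Set Γ)) (T t : ℕ) (ht : t < T)
    (seq : Fin (t+1) → Set Γ) (ops : Fin (t+1) → Bool)
    (hstep : StepOK ↑𝓑 seq ops) :
    ∃ e : Fin T → Bool × ({B // B ∈ 𝓑} ⊕ Fin T) × ({B // B ∈ 𝓑} ⊕ Fin T),
      decFuel 𝓑 T e T (T-1) = seq (Fin.last t) := by
  classical
  choose X Y hX hY heq using hstep
  set enc : ∀ (Z : Set Γ) (i : Fin (t+1)),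
      (Z ∈ (↑𝓑 : Set (Set Γ)) ∨ ∃ j, j < i ∧ Z = seq j) → ({B // B ∈ 𝓑} ⊕ Fin T) :=
    fun Z i hZ =>
      if hB : Z ∈ 𝓑 then Sum.inl ⟨Z, hB⟩
      else Sum.inr ⟨((hZ.resolve_left hB).choose : Fin (t+1)).val,
        by have := ((hZ.resolve_left hB).choose).isLt; omega⟩ with henc
  have encP : ∀ (Z : Set Γ) (i : Fin (t+1)) (hZ : _) (f : ℕ → Set Γ),
      (∀ j : Fin (t+1), j < i → f (j : ℕ) = seq j) →
      Sum.elim (fun B : {B // B ∈ 𝓑} => B.val)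
        (fun j : Fin T => if (j : ℕ) < (i : ℕ) then f (j : ℕ) else ∅) (enc Z i hZ) = Z := by
    intro Z i hZ f hf
    by_cases hB : Z ∈ 𝓑
    · simp [henc, hB]
    · have hspec := (hZ.resolve_left hB).choose_spec
      set j := (hZ.resolve_left hB).choose with hj
      have hji : (j : ℕ) < (i : ℕ) := hspec.1
      simp only [henc, dif_neg hB, Sum.elim_inr]
      rw [if_pos hji, hf j hspec.1, ← hspec.2]
  set e : Fin T → Bool × ({B // B ∈ 𝓑} ⊕ Fin T) × ({B // B ∈ 𝓑} ⊕ Fin T) :=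
    fun i => if hi : (i : ℕ) < t+1 then
        (ops ⟨i, hi⟩, enc (X ⟨i, hi⟩) ⟨i, hi⟩ (hX _), enc (Y ⟨i, hi⟩) ⟨i, hi⟩ (hY _))
      else (false, Sum.inr ⟨t, ht⟩, Sum.inr ⟨t, ht⟩) with he
  have main : ∀ i, ∀ (hi : i < t+1) (n : ℕ), i < n →
      decFuel 𝓑 T e n i = seq ⟨i, hi⟩ := by
    intro i
    induction i using Nat.strong_induction_on with
    | _ i IH =>
      intro hi n hn
      obtain ⟨n, rfl⟩ : ∃ m, n = m + 1 := ⟨n-1, by omega⟩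
      have hiT : i < T := by omega
      have hev : e ⟨i, hiT⟩ =
          (ops ⟨i, hi⟩, enc (X ⟨i, hi⟩) ⟨i, hi⟩ (hX _), enc (Y ⟨i, hi⟩) ⟨i, hi⟩ (hY _)) := by
        rw [he]; simp only [dif_pos hi]
      have hf : ∀ j : Fin (t+1), j < (⟨i, hi⟩ : Fin (t+1)) →
          decFuel 𝓑 T e n (j : ℕ) = seq j := by
        intro j hji
        have hji' : (j : ℕ) < i := hji
        rw [IH (j : ℕ) hji' j.isLt n (by omega)]
      have h1 := encP (X ⟨i, hi⟩) ⟨i, hi⟩ (hX _) (decFuel 𝓑 T e n) hf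
      have h2 := encP (Y ⟨i, hi⟩) ⟨i, hi⟩ (hY _) (decFuel 𝓑 T e n) hf
      rw [decFuel, dif_pos hiT]
      simp only [hev]
      rw [heq ⟨i, hi⟩]
      cases hop : ops ⟨i, hi⟩ <;> simp only [hop, if_true, if_false, Bool.false_eq_true] <;>
        rw [h1, h2]
  have pad : ∀ i, t < i → i < T → ∀ n, i < n →
      decFuel 𝓑 T e n i = seq (Fin.last t) := by
    intro i hti hiT n hn
    obtain ⟨n, rfl⟩ : ∃ m, n = m + 1 := ⟨n-1, by omega⟩
    have hev : e ⟨i, hiT⟩ = (false, Sum.inr ⟨t, ht⟩, Sum.inr ⟨t, ht⟩) := by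
      rw [he]; simp only [dif_neg (by omega : ¬ i < t+1)]
    rw [decFuel, dif_pos hiT]
    simp only [hev, Sum.elim_inr, Bool.false_eq_true, if_false]
    rw [if_pos (show ((⟨t, ht⟩ : Fin T) : ℕ) < i from hti)]
    rw [main t (by omega) n (by omega)]
    simp [Fin.last]
  refine ⟨e, ?_⟩
  rcases eq_or_lt_of_le (show t ≤ T - 1 by omega) with hEq | hLt
  · rw [← hEq, main t (by omega) T (by omega)]
    rfl
  · exact pad (T-1) hLt (by omega) T (by omega)

end Aux

/-- Complex sets: if `|Γ| = k`, `|𝓑| = m`, `s ≥ 1`, and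
`3·s·⌈log₂(m + s)⌉ < k`, then there exists `A ⊆ Γ` with `D(A | 𝓑) ≥ s`. -/
theorem complex_sets_exist {Γ : Type*} [Fintype Γ] [Nonempty Γ]
    (𝓑 : Finset (Set Γ)) (s : ℕ) (hs : 0 < s)
    (h : 3 * s * Nat.clog 2 (𝓑.card + s) < Fintype.card Γ) :
    ∃ A : Set Γ, (s : ℕ∞) ≤ Dtot A ↑𝓑 := by
  classical
  set_option synthInstance.maxHeartbeats 1000000 in
  by_contra hcon
  push_neg at hcon
  set k := Fintype.card Γ with hk
  set m := 𝓑.card with hm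
  set T := s - 1 with hT
  have hsurj : Function.Surjective
      (fun e : Fin T → Bool × ({B // B ∈ 𝓑} ⊕ Fin T) × ({B // B ∈ 𝓑} ⊕ Fin T) =>
        decFuel 𝓑 T e T (T-1)) := by
    intro A
    have hA := hcon A
    rw [Dtot, sInf_lt_iff] at hA
    obtain ⟨m', ⟨t, seq, ops, hstep, hlast, rfl⟩, hlt⟩ := hA
    have ht : t + 1 < s := by exact_mod_cast hlt
    obtain ⟨e, he⟩ := decFuel_encode 𝓑 T t (by omega) seq ops hstep
    exact ⟨e, he.trans hlast⟩
  have hcard := Fintype.card_le_of_surjective _ hsurj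
  rw [Fintype.card_set, ← hk] at hcard
  have hE : Fintype.card
      (Fin T → Bool × ({B // B ∈ 𝓑} ⊕ Fin T) × ({B // B ∈ 𝓑} ⊕ Fin T)) =
      (2 * ((m + T) * (m + T))) ^ T := by
    simp [Fintype.card_fun, Fintype.card_prod, Fintype.card_sum, Fintype.card_coe, hm]
  rw [hE] at hcard
  rcases Nat.eq_zero_or_pos T with hT0 | hT1
  · rw [hT0, pow_zero] at hcard
    have hk1 : 0 < k := Fintype.card_pos
    have : (2:ℕ) ≤ 2 ^ k := by
      calc (2:ℕ) = 2 ^ 1 := (pow_one 2).symm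
      _ ≤ 2 ^ k := Nat.pow_le_pow_right (by norm_num) hk1
    omega
  · set L := Nat.clog 2 (m + s) with hL
    have hL1 : 1 ≤ L := Nat.clog_pos (by norm_num) (by omega)
    have hms : m + s ≤ 2 ^ L := Nat.le_pow_clog (by norm_num) _
    have hbase : 2 * ((m + T) * (m + T)) ≤ 2 ^ (2 * L + 1) := by
      have h1 : m + T ≤ 2 ^ L := by omega
      calc 2 * ((m + T) * (m + T)) ≤ 2 * (2 ^ L * 2 ^ L) := by
            exact Nat.mul_le_mul_left 2 (Nat.mul_le_mul h1 h1)
        _ = 2 ^ (2 * L + 1) := by ring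
    have hexp : (2 * L + 1) * T < k := by
      have hTs : s = T + 1 := by omega
      have key : T ≤ L * T := Nat.le_mul_of_pos_left T hL1
      have : (2 * L + 1) * T ≤ 3 * s * L := by
        calc (2 * L + 1) * T = 2 * (L * T) + T := by ring
          _ ≤ 3 * (L * T) + 3 * L := by omega
          _ = 3 * s * L := by rw [hTs]; ring
      omega
    have : 2 ^ k ≤ 2 ^ ((2 * L + 1) * T) := by
      calc 2 ^ k ≤ (2 * ((m + T) * (m + T))) ^ T := hcard
        _ ≤ (2 ^ (2 * L + 1)) ^ T := Nat.pow_le_pow_left hbase T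
        _ = 2 ^ ((2 * L + 1) * T) := by rw [← pow_mul]
    have hlt2 : 2 ^ ((2 * L + 1) * T) < 2 ^ k :=
      Nat.pow_lt_pow_right (by norm_num) hexp
    omega
end

section
/- There exists an absolute constant c > 0 such that for every nonempty finite ground set Γ, every nonempty family 𝓑 of subsets of Γ, and every A ⊆ Γ with finite intersection complexity D_∩(A | 𝓑) = t, one has D_∪(A | 𝓑) ≤ D(A | 𝓑) ≤ c · (t + |𝓑|)³. -/
open Set Filter

section Aux

variable {Γ : Type*}

/-- A set is available: either a generator or an entry of the sequence. -/
def Avail (𝓑 : Set (Set Γ)) {n : ℕ} (seq : Fin n → Set Γ) (X : Set Γ) : Prop :=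
  X ∈ 𝓑 ∨ ∃ j, X = seq j

lemma ext_one {𝓑 : Set (Set Γ)} {n : ℕ} {seq : Fin (n + 1) → Set Γ}
    {ops : Fin (n + 1) → Bool} (h : StepOK 𝓑 seq ops) {X Y : Set Γ}
    (hX : Avail 𝓑 seq X) (hY : Avail 𝓑 seq Y) (b : Bool) :
    ∃ (seq' : Fin (n + 2) → Set Γ) (ops' : Fin (n + 2) → Bool),
      StepOK 𝓑 seq' ops' ∧ (∀ Z, Avail 𝓑 seq Z → Avail 𝓑 seq' Z) ∧
      seq' (Fin.last (n + 1)) = (if b then X ∩ Y else X ∪ Y) := by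
  refine ⟨Fin.snoc seq (if b then X ∩ Y else X ∪ Y), Fin.snoc ops b, ?_, ?_, by simp⟩
  · intro i
    induction i using Fin.lastCases with
    | last =>
      refine ⟨X, Y, ?_, ?_, by simp⟩
      · rcases hX with hX | ⟨j, rfl⟩
        · exact Or.inl hX
        · exact Or.inr ⟨j.castSucc, Fin.castSucc_lt_last j, by simp⟩
      · rcases hY with hY | ⟨j, rfl⟩
        · exact Or.inl hY
        · exact Or.inr ⟨j.castSucc, Fin.castSucc_lt_last j, by simp⟩
    | cast i =>
      obtain ⟨X', Y', h1, h2, h3⟩ := h i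
      refine ⟨X', Y', ?_, ?_, by simpa using h3⟩
      · rcases h1 with h1 | ⟨j, hj, rfl⟩
        · exact Or.inl h1
        · exact Or.inr ⟨j.castSucc, by simpa using hj, by simp⟩
      · rcases h2 with h2 | ⟨j, hj, rfl⟩
        · exact Or.inl h2
        · exact Or.inr ⟨j.castSucc, by simpa using hj, by simp⟩
  · intro Z hZ
    rcases hZ with hZ | ⟨j, rfl⟩
    · exact Or.inl hZ
    · exact Or.inr ⟨j.castSucc, by simp⟩

lemma build_union {𝓑 : Set (Set Γ)} {S : Finset (Set Γ)} (hS : S.Nonempty) :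
    ∀ {n : ℕ} (seq : Fin (n + 1) → Set Γ) (ops : Fin (n + 1) → Bool),
      StepOK 𝓑 seq ops → (∀ W ∈ S, Avail 𝓑 seq W) →
      ∃ m, 1 ≤ m ∧ m ≤ S.card ∧
        ∃ (seq' : Fin (n + m + 1) → Set Γ) (ops' : Fin (n + m + 1) → Bool),
          StepOK 𝓑 seq' ops' ∧ (∀ Z, Avail 𝓑 seq Z → Avail 𝓑 seq' Z) ∧
          seq' (Fin.last (n + m)) = ⋃₀ ↑S := by
  induction hS using Finset.Nonempty.cons_induction with
  | singleton a =>
    intro n seq ops h hav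
    obtain ⟨seq', ops', h1, h2, h3⟩ :=
      ext_one h (hav a (by simp)) (hav a (by simp)) false
    exact ⟨1, le_refl _, by simp, seq', ops', h1, h2, by simpa using h3⟩
  | cons a s ha hs IH =>
    intro n seq ops h hav
    obtain ⟨m, hm1, hm2, seq₁, ops₁, h1, h2, h3⟩ :=
      IH seq ops h (fun W hW => hav W (by simp [hW]))
    have hXav : Avail 𝓑 seq₁ (⋃₀ ↑s) := Or.inr ⟨Fin.last (n + m), h3.symm⟩
    have hYav : Avail 𝓑 seq₁ a := h2 a (hav a (by simp))
    obtain ⟨seq', ops', g1, g2, g3⟩ := ext_one h1 hXav hYav false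
    refine ⟨m + 1, by omega, by rw [Finset.card_cons]; omega, seq', ops', g1,
      fun Z hZ => g2 Z (h2 Z hZ), ?_⟩
    show seq' (Fin.last (n + m + 1)) = ⋃₀ ↑(Finset.cons a s ha)
    rw [g3]
    simp [Set.sUnion_insert, Set.union_comm]

lemma decomp {𝓑 : Set (Set Γ)} {t₀ : ℕ} {seq : Fin (t₀ + 1) → Set Γ}
    {ops : Fin (t₀ + 1) → Bool} (h : StepOK 𝓑 seq ops) :
    ∀ i : Fin (t₀ + 1), ∃ S : Finset (Set Γ), S.Nonempty ∧
      (∀ W ∈ S, W ∈ 𝓑 ∨ ∃ j, j ≤ i ∧ ops j = true ∧ W = seq j) ∧ seq i = ⋃₀ ↑S := by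
  suffices H : ∀ k : ℕ, ∀ i : Fin (t₀ + 1), (i : ℕ) = k →
      ∃ S : Finset (Set Γ), S.Nonempty ∧
      (∀ W ∈ S, W ∈ 𝓑 ∨ ∃ j, j ≤ i ∧ ops j = true ∧ W = seq j) ∧ seq i = ⋃₀ ↑S by
    intro i; exact H i i rfl
  intro k
  induction k using Nat.strong_induction_on with
  | _ k IHk =>
  rintro i rfl
  have IH : ∀ j : Fin (t₀ + 1), j < i →
      ∃ S : Finset (Set Γ), S.Nonempty ∧
      (∀ W ∈ S, W ∈ 𝓑 ∨ ∃ j', j' ≤ j ∧ ops j' = true ∧ W = seq j') ∧ seq j = ⋃₀ ↑S :=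
    fun j hj => IHk j.1 hj j rfl
  by_cases hop : ops i = true
  · exact ⟨{seq i}, Finset.singleton_nonempty _,
      fun W hW => Or.inr ⟨i, le_refl _, hop, by simpa using hW⟩, by simp⟩
  · obtain ⟨X, Y, hX, hY, heq⟩ := h i
    rw [if_neg hop] at heq
    have key : ∀ Z : Set Γ, (Z ∈ 𝓑 ∨ ∃ j, j < i ∧ Z = seq j) →
        ∃ S : Finset (Set Γ), S.Nonempty ∧
          (∀ W ∈ S, W ∈ 𝓑 ∨ ∃ j, j ≤ i ∧ ops j = true ∧ W = seq j) ∧ Z = ⋃₀ ↑S := by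
      rintro Z (hZ | ⟨j, hj, rfl⟩)
      · exact ⟨{Z}, Finset.singleton_nonempty _,
          fun W hW => Or.inl (by rwa [Finset.mem_singleton.mp hW]), by simp⟩
      · obtain ⟨S, hne, hmem, hun⟩ := IH j hj
        refine ⟨S, hne, fun W hW => ?_, hun⟩
        rcases hmem W hW with h' | ⟨j', hj', h1, h2⟩
        · exact Or.inl h'
        · exact Or.inr ⟨j', le_trans hj' hj.le, h1, h2⟩
    obtain ⟨SX, hXne, hXmem, hXun⟩ := key X hX
    obtain ⟨SY, hYne, hYmem, hYun⟩ := key Y hY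
    classical
    refine ⟨SX ∪ SY, Finset.Nonempty.mono Finset.subset_union_left hXne,
      fun W hW => ?_, ?_⟩
    · rcases Finset.mem_union.mp hW with h' | h'
      · exact hXmem W h'
      · exact hYmem W h'
    · rw [heq, hXun, hYun]
      simp [Set.sUnion_union]

lemma decomp_card {𝓑f : Finset (Set Γ)} {t₀ : ℕ} {seq : Fin (t₀ + 1) → Set Γ}
    {ops : Fin (t₀ + 1) → Bool} (h : StepOK ↑𝓑f seq ops) (i : Fin (t₀ + 1)) :
    ∃ S : Finset (Set Γ), S.Nonempty ∧ S.card ≤ 𝓑f.card + interCount ops ∧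
      (∀ W ∈ S, W ∈ (𝓑f : Set (Set Γ)) ∨ ∃ j, j ≤ i ∧ ops j = true ∧ W = seq j) ∧
      seq i = ⋃₀ ↑S := by
  classical
  obtain ⟨S, hne, hmem, hun⟩ := decomp h i
  refine ⟨S, hne, ?_, hmem, hun⟩
  have hsub : S ⊆ 𝓑f ∪ (Finset.univ.filter fun j => ops j = true).image seq := by
    intro W hW
    rcases hmem W hW with h' | ⟨j, _, hj, rfl⟩
    · exact Finset.mem_union_left _ (Finset.mem_coe.mp h')
    · exact Finset.mem_union_right _
        (Finset.mem_image.mpr ⟨j, Finset.mem_filter.mpr ⟨Finset.mem_univ _, hj⟩, rfl⟩)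
  calc S.card ≤ _ := Finset.card_le_card hsub
    _ ≤ 𝓑f.card + (Finset.univ.filter fun j => ops j = true).card := by
        exact le_trans (Finset.card_union_le _ _)
          (by gcongr; exact Finset.card_image_le)
    _ = 𝓑f.card + interCount ops := rfl

end Aux

/-- Intersection complexity versus discrete complexity: there is
an absolute constant `c > 0` such that for every nonempty finite `Γ`, nonempty
family `𝓑`, and `A ⊆ Γ` with finite intersection complexity `D_∩(A | 𝓑) = t`,
`D_∪(A | 𝓑) ≤ D(A | 𝓑) ≤ c·(t + |𝓑|)³`. -/
theorem inter_vs_total_complexity :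
    ∃ c : ℕ, 0 < c ∧ ∀ (Γ : Type) [Fintype Γ] [Nonempty Γ],
      ∀ (𝓑 : Finset (Set Γ)), 𝓑.Nonempty → ∀ (A : Set Γ) (t : ℕ),
      Dcap A ↑𝓑 = (t : ℕ∞) →
      Dcup A ↑𝓑 ≤ Dtot A ↑𝓑 ∧ Dtot A ↑𝓑 ≤ ((c * (t + 𝓑.card) ^ 3 : ℕ) : ℕ∞) := by
  classical
  refine ⟨100, by norm_num, ?_⟩
  intro Γ _ _ 𝓑f h𝓑 A t ht
  constructor
  · -- Dcup ≤ Dtot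
    refine le_sInf ?_
    rintro m ⟨t', seq, ops, h1, h2, rfl⟩
    refine le_trans (sInf_le ⟨t', seq, ops, h1, h2, rfl⟩) ?_
    have hle : unionCount ops ≤ t' + 1 := by
      have := Finset.card_filter_le (Finset.univ : Finset (Fin (t' + 1)))
        (fun i => ops i = false)
      simpa [unionCount] using this
    exact_mod_cast hle
  · -- Dtot bound
    have hlt : Dcap A ↑𝓑f < ((t + 1 : ℕ) : ℕ∞) := by
      rw [ht]; exact_mod_cast Nat.lt_succ_self t
    rw [Dcap] at hlt
    obtain ⟨mm, hm, hmlt⟩ := sInf_lt_iff.mp hlt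
    obtain ⟨t₀, wseq, wops, hw, hlast, rfl⟩ := hm
    have hic : interCount wops ≤ t := by
      have : (interCount wops : ℕ) < t + 1 := by exact_mod_cast hmlt
      omega
    set b := 𝓑f.card with hbdef
    have hb : 1 ≤ b := Finset.card_pos.mpr h𝓑
    set M := 2 * (b + t) + 1 with hM
    set cnt : ℕ → ℕ := fun k =>
      (Finset.univ.filter fun i : Fin (t₀ + 1) => (i : ℕ) < k ∧ wops i = true).card
      with hcnt
    have cnt_mono : ∀ k, cnt k ≤ cnt (k + 1) := by
      intro k
      apply Finset.card_le_card
      intro i hi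
      simp only [Finset.mem_filter, Finset.mem_univ, true_and] at hi ⊢
      exact ⟨by omega, hi.2⟩
    have cnt_le : ∀ k, cnt k ≤ t := by
      intro k
      refine le_trans ?_ hic
      unfold interCount
      apply Finset.card_le_card
      intro i hi
      simp only [Finset.mem_filter, Finset.mem_univ, true_and] at hi ⊢
      exact hi.2
    have main : ∀ k : ℕ, ∃ n, n + 1 ≤ 1 + cnt k * M ∧
        ∃ (seq : Fin (n + 1) → Set Γ) (ops : Fin (n + 1) → Bool),
          StepOK ↑𝓑f seq ops ∧
          ∀ i : Fin (t₀ + 1), (i : ℕ) < k → wops i = true →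
            Avail ↑𝓑f seq (wseq i) := by
      intro k
      induction k with
      | zero =>
        obtain ⟨B₀, hB₀⟩ := h𝓑
        refine ⟨0, by omega, fun _ => B₀ ∪ B₀, fun _ => false, ?_, ?_⟩
        · intro i
          exact ⟨B₀, B₀, Or.inl (Finset.mem_coe.mpr hB₀),
            Or.inl (Finset.mem_coe.mpr hB₀), by simp⟩
        · intro i hi
          exact absurd hi (by omega)
      | succ k IHmain =>
        obtain ⟨n, hn1, seq, ops, hst, hav⟩ := IHmain
        by_cases hk : k < t₀ + 1
        · set i₀ : Fin (t₀ + 1) := ⟨k, hk⟩ with hi₀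
          by_cases hop : wops i₀ = true
          · obtain ⟨X, Y, hX, hY, heq⟩ := hw i₀
            rw [if_pos hop] at heq
            have key : ∀ Z : Set Γ,
                (Z ∈ (↑𝓑f : Set (Set Γ)) ∨ ∃ j, j < i₀ ∧ Z = wseq j) →
                ∃ S : Finset (Set Γ), S.Nonempty ∧ S.card ≤ b + t ∧
                  (∀ W ∈ S, Avail ↑𝓑f seq W) ∧ Z = ⋃₀ ↑S := by
              rintro Z (hZ | ⟨j, hj, rfl⟩)
              · exact ⟨{Z}, Finset.singleton_nonempty _, by simp; omega,
                  fun W hW => Or.inl (by rwa [Finset.mem_singleton.mp hW]), by simp⟩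
              · obtain ⟨S, hne, hcard, hmem, hun⟩ := decomp_card hw j
                refine ⟨S, hne, le_trans hcard (by omega), fun W hW => ?_, hun⟩
                rcases hmem W hW with h' | ⟨j', hj', hj'op, rfl⟩
                · exact Or.inl h'
                · refine hav j' ?_ hj'op
                  have e1 : (j' : ℕ) ≤ (j : ℕ) := hj'
                  have e2 : (j : ℕ) < k := hj
                  omega
            obtain ⟨SX, hXne, hXc, hXav, hXun⟩ := key X hX
            obtain ⟨SY, hYne, hYc, hYav, hYun⟩ := key Y hY
            obtain ⟨m₁, hm11, hm12, seq₁, ops₁, g1, g2, g3⟩ :=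
              build_union hXne seq ops hst hXav
            obtain ⟨m₂, hm21, hm22, seq₂, ops₂, f1, f2, f3⟩ :=
              build_union hYne seq₁ ops₁ g1 (fun W hW => g2 W (hYav W hW))
            have hXav2 : Avail ↑𝓑f seq₂ X :=
              f2 X (Or.inr ⟨Fin.last _, hXun.trans g3.symm⟩)
            have hYav2 : Avail ↑𝓑f seq₂ Y := Or.inr ⟨Fin.last _, hYun.trans f3.symm⟩
            obtain ⟨seq₃, ops₃, e1, e2, e3⟩ := ext_one f1 hXav2 hYav2 true
            rw [if_pos rfl] at e3
            refine ⟨n + m₁ + m₂ + 1, ?_, seq₃, ops₃, e1, ?_⟩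
            · have hnotmem : i₀ ∉ (Finset.univ.filter
                  fun i : Fin (t₀ + 1) => (i : ℕ) < k ∧ wops i = true) := by
                simp [hi₀]
              have hcm : cnt k + 1 ≤ cnt (k + 1) := by
                have hsub : insert i₀ (Finset.univ.filter
                    fun i : Fin (t₀ + 1) => (i : ℕ) < k ∧ wops i = true) ⊆
                    (Finset.univ.filter
                    fun i : Fin (t₀ + 1) => (i : ℕ) < k + 1 ∧ wops i = true) := by
                  intro x hx
                  rcases Finset.mem_insert.mp hx with rfl | hx
                  · simp only [Finset.mem_filter, Finset.mem_univ, true_and]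
                    exact ⟨by simp [hi₀], hop⟩
                  · simp only [Finset.mem_filter, Finset.mem_univ, true_and] at hx ⊢
                    exact ⟨by omega, hx.2⟩
                calc cnt k + 1
                    = (insert i₀ (Finset.univ.filter
                        fun i : Fin (t₀ + 1) => (i : ℕ) < k ∧ wops i = true)).card :=
                      (Finset.card_insert_of_notMem hnotmem).symm
                  _ ≤ cnt (k + 1) := Finset.card_le_card hsub
            -- arithmetic
              have hm1b : m₁ ≤ b + t := le_trans hm12 hXc
              have hm2b : m₂ ≤ b + t := le_trans hm22 hYc
              have h2 : cnt k * M + M ≤ cnt (k + 1) * M := by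
                calc cnt k * M + M = (cnt k + 1) * M := by ring
                  _ ≤ cnt (k + 1) * M := Nat.mul_le_mul_right _ hcm
              generalize hP : cnt k * M = P at hn1 h2
              generalize hQ : cnt (k + 1) * M = Q at h2
              omega
            · intro i hik hiop
              by_cases hich : (i : ℕ) = k
              · have hii : i = i₀ := Fin.ext hich
                subst hii
                exact Or.inr ⟨Fin.last _, by rw [e3, ← heq]⟩
              · exact e2 _ (f2 _ (g2 _ (hav i (by omega) hiop)))
          · refine ⟨n, le_trans hn1 (by
              have := Nat.mul_le_mul_right M (cnt_mono k); omega), seq, ops, hst, ?_⟩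
            intro i hik hiop
            refine hav i ?_ hiop
            rcases Nat.lt_succ_iff_lt_or_eq.mp hik with h | h
            · exact h
            · exact absurd hiop (by simpa [show i = i₀ from Fin.ext h] using hop)
        · refine ⟨n, le_trans hn1 (by
            have := Nat.mul_le_mul_right M (cnt_mono k); omega), seq, ops, hst, ?_⟩
          intro i _ hiop
          exact hav i (by have := i.isLt; omega) hiop
    obtain ⟨n, hn, seq, ops, hst, hav⟩ := main (t₀ + 1)
    obtain ⟨SA, hAne, hAc, hAmem, hAun⟩ := decomp_card hw (Fin.last t₀)
    have hAav : ∀ W ∈ SA, Avail ↑𝓑f seq W := by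
      intro W hW
      rcases hAmem W hW with h' | ⟨j, _, hjop, rfl⟩
      · exact Or.inl h'
      · exact hav j j.isLt hjop
    obtain ⟨m, hm1, hm2, seqF, opsF, F1, F2, F3⟩ := build_union hAne seq ops hst hAav
    have hlastF : seqF (Fin.last (n + m)) = A := by rw [F3, ← hAun, hlast]
    have hD : Dtot A ↑𝓑f ≤ ((n + m + 1 : ℕ) : ℕ∞) :=
      sInf_le ⟨n + m, seqF, opsF, F1, hlastF, rfl⟩
    refine le_trans hD ?_
    have harith : n + m + 1 ≤ 100 * (t + b) ^ 3 := by
      have h1 : cnt (t₀ + 1) ≤ t := cnt_le _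
      have h2 : cnt (t₀ + 1) * M ≤ t * M := Nat.mul_le_mul_right _ h1
      have h3 : m ≤ b + t := le_trans hm2 (by omega)
      have h5 : t * M ≤ 3 * ((t + b) * (t + b)) := by
        have hM3 : M ≤ 3 * (t + b) := by omega
        calc t * M ≤ (t + b) * (3 * (t + b)) := Nat.mul_le_mul (by omega) hM3
          _ = 3 * ((t + b) * (t + b)) := by ring
      have hcube : (t + b) ^ 3 = (t + b) * (t + b) * (t + b) := by ring
      have hsq : (t + b) * (t + b) ≤ (t + b) * (t + b) * (t + b) :=
        Nat.le_mul_of_pos_right _ (by omega)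
      have h6 : t + b ≤ (t + b) * (t + b) := Nat.le_mul_of_pos_left _ (by omega)
      generalize hP : cnt (t₀ + 1) * M = P at hn h2
      generalize hQ : t * M = Q at h2 h5
      generalize hR : (t + b) * (t + b) = R at h5 hcube hsq h6
      generalize hS : R * (t + b) = S3 at hcube hsq
      rw [hcube]
      omega
    exact_mod_cast harith
end

section
/- Let N = 2^n. For any non-trivial graph G ⊆ [N] × [N], ρ(G, 𝓖_{N,N}) ≤ D_∩(φ(G) | 𝓑_{2n}); that is, the cover complexity of G with respect to the graph-complexity generators is at most the AND (intersection) complexity of the associated Boolean function f_G. -/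
open Set Filter

/-- Reducing circuit lower bounds to two-dimensional cover
problems: for `N = 2^n` and any non-trivial graph `G ⊆ [N] × [N]`,
`ρ(G, 𝓖_{N,N}) ≤ D_∩(φ(G) | 𝓑_{2n})`. -/
theorem graph_cover_le_circuit_inter (n : ℕ) (G : Set (Fin (2 ^ n) × Fin (2 ^ n)))
    (hG₁ : G ≠ ∅) (hG₂ : G ≠ Set.univ) :
    rho G (graphGens (2 ^ n) (2 ^ n)) ≤ Dcap (phi n '' G) (cubeGens (2 * n)) := by
  classical
  apply le_sInf
  rintro m ⟨t, seq, ops, hstep, hlast, rfl⟩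
  choose X Y hX hY hseq using hstep
  set E : Fin (t + 1) → Set (Fin (2 ^ n) × Fin (2 ^ n)) :=
    fun i => phi n ⁻¹' (X i) ∩ Gᶜ with hE
  set H : Fin (t + 1) → Set (Fin (2 ^ n) × Fin (2 ^ n)) :=
    fun i => phi n ⁻¹' (Y i) ∩ Gᶜ with hH
  set Λ : Finset (Set (Fin (2 ^ n) × Fin (2 ^ n)) × Set (Fin (2 ^ n) × Fin (2 ^ n))) :=
    (Finset.univ.filter fun i => ops i = true).image (fun i => (E i, H i)) with hΛ
  have hcard : ((Λ.card : ℕ) : ℕ∞) ≤ ((interCount ops : ℕ) : ℕ∞) := by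
    exact_mod_cast Finset.card_image_le
  refine le_trans (sInf_le ⟨Λ, ⟨?_, ?_⟩, rfl⟩) hcard
  · rintro p hp
    simp only [hΛ, Finset.mem_image, Finset.mem_filter] at hp
    obtain ⟨i, _, rfl⟩ := hp
    exact ⟨Set.inter_subset_right, Set.inter_subset_right⟩
  · rintro ⟨F, a, hF, haG, habove, hpres⟩
    obtain ⟨-, -, hupF, hemp⟩ := hF
    have genLem : ∀ B ∈ cubeGens (2 * n), phi n a ∈ B → phi n ⁻¹' B ∩ Gᶜ ∈ F := by
      rintro B ⟨j, hB⟩ hmem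
      obtain ⟨b, rfl⟩ : ∃ b, B = {v | v j = b} := by
        rcases hB with h | h
        exacts [⟨true, h⟩, ⟨false, h⟩]
      by_cases hj : (j : ℕ) < n
      · have hsub : rowSet (2 ^ n) (2 ^ n) a.1 ∩ Gᶜ ⊆ phi n ⁻¹' {v | v j = b} ∩ Gᶜ := by
          rintro p ⟨hp1, hp2⟩
          refine ⟨?_, hp2⟩
          show phi n p j = b
          have : phi n p j = phi n a j := by
            simp only [phi, dif_pos hj]
            rw [show p.1 = a.1 from hp1]
          rw [this]; exact hmem
        exact hupF _ (habove _ (Or.inl ⟨a.1, rfl⟩) rfl) _ hsub Set.inter_subset_right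
      · have hsub : colSet (2 ^ n) (2 ^ n) a.2 ∩ Gᶜ ⊆ phi n ⁻¹' {v | v j = b} ∩ Gᶜ := by
          rintro p ⟨hp1, hp2⟩
          refine ⟨?_, hp2⟩
          show phi n p j = b
          have : phi n p j = phi n a j := by
            simp only [phi, dif_neg hj]
            rw [show p.2 = a.2 from hp1]
          rw [this]; exact hmem
        exact hupF _ (habove _ (Or.inr ⟨a.2, rfl⟩) rfl) _ hsub Set.inter_subset_right
    have key : ∀ k : ℕ, ∀ i : Fin (t + 1), (i : ℕ) = k → phi n a ∈ seq i →
        phi n ⁻¹' (seq i) ∩ Gᶜ ∈ F := by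
      intro k
      induction k using Nat.strong_induction_on with
      | _ k ih =>
        intro i hik hmem
        have hXF : phi n a ∈ X i → phi n ⁻¹' (X i) ∩ Gᶜ ∈ F := by
          rcases hX i with hB | ⟨j, hj, hXe⟩
          · exact genLem _ hB
          · intro h; rw [hXe] at h ⊢; exact ih (j : ℕ) (hik ▸ hj) j rfl h
        have hYF : phi n a ∈ Y i → phi n ⁻¹' (Y i) ∩ Gᶜ ∈ F := by
          rcases hY i with hB | ⟨j, hj, hYe⟩
          · exact genLem _ hB
          · intro h; rw [hYe] at h ⊢; exact ih (j : ℕ) (hik ▸ hj) j rfl h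
        by_cases hop : ops i = true
        · rw [hseq i, if_pos hop] at hmem ⊢
          have hEi := hXF hmem.1
          have hHi := hYF hmem.2
          have hΛmem : (E i, H i) ∈ Λ :=
            Finset.mem_image_of_mem _ (Finset.mem_filter.2 ⟨Finset.mem_univ i, hop⟩)
          have := hpres _ hΛmem hEi hHi
          have heq : phi n ⁻¹' (X i ∩ Y i) ∩ Gᶜ = E i ∩ H i := by
            simp only [hE, hH, Set.preimage_inter]
            ext x; simp; tauto
          rw [heq]; exact this
        · rw [hseq i, if_neg hop] at hmem ⊢
          rcases hmem with h | h
          · exact hupF _ (hXF h) _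
              (Set.inter_subset_inter_left _ (Set.preimage_mono Set.subset_union_left))
              Set.inter_subset_right
          · exact hupF _ (hYF h) _
              (Set.inter_subset_inter_left _ (Set.preimage_mono Set.subset_union_right))
              Set.inter_subset_right
    have hfin : phi n ⁻¹' (seq (Fin.last t)) ∩ Gᶜ ∈ F :=
      key _ (Fin.last t) rfl (by rw [hlast]; exact Set.mem_image_of_mem _ haG)
    rw [hlast, Set.preimage_image_eq G (phi_injective n), Set.inter_compl_self] at hfin
    exact hemp hfin
end

section
/- Let N = 2^n with n ≥ 1, and let G_NEQ = {(u, v) ∈ [N] × [N] : u ≠ v}. Then ρ_can(G_NEQ, 𝓖_{N,N}) = ρ(G_NEQ, 𝓖_{N,N}) = D_∩(G_NEQ | 𝓖_{N,N}) = n = log₂ N. -/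
open Set Filter

section GenSeq
variable {Γ : Type*}

inductive GenN (𝓑 : Set (Set Γ)) : Set Γ → ℕ → Prop
  | base {B : Set Γ} : B ∈ 𝓑 → GenN 𝓑 B 0
  | union {X Y : Set Γ} {k l : ℕ} : GenN 𝓑 X k → GenN 𝓑 Y l → GenN 𝓑 (X ∪ Y) (k + l)
  | inter {X Y : Set Γ} {k l : ℕ} : GenN 𝓑 X k → GenN 𝓑 Y l → GenN 𝓑 (X ∩ Y) (k + l + 1)

def StepOKN (𝓑 : Set (Set Γ)) (T : ℕ) (seq : ℕ → Set Γ) (ops : ℕ → Bool) : Prop :=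
  ∀ i < T, ∃ X Y : Set Γ,
    (X ∈ 𝓑 ∨ ∃ j < i, X = seq j) ∧ (Y ∈ 𝓑 ∨ ∃ j < i, Y = seq j) ∧
    seq i = if ops i = true then X ∩ Y else X ∪ Y

lemma seq_combine {𝓑 : Set (Set Γ)} {X Y : Set Γ} {T1 T2 : ℕ}
    {s1 s2 : ℕ → Set Γ} {o1 o2 : ℕ → Bool} (op : Bool)
    (hT1 : 0 < T1) (hT2 : 0 < T2) (h1 : StepOKN 𝓑 T1 s1 o1) (h2 : StepOKN 𝓑 T2 s2 o2)
    (hl1 : s1 (T1 - 1) = X) (hl2 : s2 (T2 - 1) = Y) :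
    ∃ (T : ℕ) (seq : ℕ → Set Γ) (ops : ℕ → Bool), 0 < T ∧ StepOKN 𝓑 T seq ops ∧
      seq (T - 1) = (if op then X ∩ Y else X ∪ Y) ∧
      ((Finset.range T).filter fun i => ops i = true).card =
        ((Finset.range T1).filter fun i => o1 i = true).card +
        ((Finset.range T2).filter fun i => o2 i = true).card + (if op then 1 else 0) := by
  classical
  set Z := if op then X ∩ Y else X ∪ Y with hZ
  refine ⟨T1 + T2 + 1,
    fun i => if i < T1 then s1 i else if i < T1 + T2 then s2 (i - T1) else Z,
    fun i => if i < T1 then o1 i else if i < T1 + T2 then o2 (i - T1) else op, by omega, ?_, ?_, ?_⟩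
  · intro i hi
    rcases lt_or_ge i T1 with h | h
    · obtain ⟨X', Y', hX', hY', heq⟩ := h1 i h
      refine ⟨X', Y', ?_, ?_, ?_⟩
      · rcases hX' with hb | ⟨j, hj, rfl⟩
        · exact Or.inl hb
        · exact Or.inr ⟨j, hj, by simp [show j < T1 by omega]⟩
      · rcases hY' with hb | ⟨j, hj, rfl⟩
        · exact Or.inl hb
        · exact Or.inr ⟨j, hj, by simp [show j < T1 by omega]⟩
      · simpa [h] using heq
    · rcases lt_or_ge i (T1 + T2) with h' | h'
      · obtain ⟨X', Y', hX', hY', heq⟩ := h2 (i - T1) (by omega)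
        refine ⟨X', Y', ?_, ?_, ?_⟩
        · rcases hX' with hb | ⟨j, hj, rfl⟩
          · exact Or.inl hb
          · refine Or.inr ⟨j + T1, by omega, ?_⟩
            simp only [show ¬ (j + T1 < T1) by omega, if_false, show j + T1 < T1 + T2 by omega,
              if_true, Nat.add_sub_cancel]
        · rcases hY' with hb | ⟨j, hj, rfl⟩
          · exact Or.inl hb
          · refine Or.inr ⟨j + T1, by omega, ?_⟩
            simp only [show ¬ (j + T1 < T1) by omega, if_false, show j + T1 < T1 + T2 by omega,
              if_true, Nat.add_sub_cancel]
        · simpa [show ¬ i < T1 by omega, h'] using heq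
      · have hi' : i = T1 + T2 := by omega
        refine ⟨X, Y, Or.inr ⟨T1 - 1, by omega, ?_⟩, Or.inr ⟨T1 + T2 - 1, by omega, ?_⟩, ?_⟩
        · simp [show T1 - 1 < T1 by omega, hl1]
        · simp only [show ¬ (T1 + T2 - 1 < T1) by omega, if_false,
            show T1 + T2 - 1 < T1 + T2 by omega, if_true, show T1 + T2 - 1 - T1 = T2 - 1 by omega,
            hl2]
        · subst hi'
          simp only [show ¬ (T1 + T2 < T1) by omega, if_false, lt_irrefl, hZ]
  · simp only [Nat.add_sub_cancel, show ¬ (T1 + T2 < T1) by omega, if_false, lt_irrefl]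
  · rw [Finset.card_filter, Finset.card_filter, Finset.card_filter,
      Finset.sum_range_succ, Finset.sum_range_add]
    have e1 : ∀ i ∈ Finset.range T1,
        (if (if i < T1 then o1 i else if i < T1 + T2 then o2 (i - T1) else op) = true then 1 else 0)
          = if o1 i = true then 1 else 0 := by
      intro i hi; simp only [Finset.mem_range] at hi; simp [hi]
    have e2 : ∀ i ∈ Finset.range T2,
        (if (if T1 + i < T1 then o1 (T1 + i) else if T1 + i < T1 + T2 then o2 (T1 + i - T1) else op) = true then 1 else 0)
          = if o2 i = true then 1 else 0 := by
      intro i hi; simp only [Finset.mem_range] at hi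
      simp [show ¬ (T1 + i < T1) by omega, show T1 + i < T1 + T2 by omega]
    rw [Finset.sum_congr rfl e1, Finset.sum_congr rfl e2]
    simp only [show ¬ (T1 + T2 < T1) by omega, if_false, lt_irrefl]

end GenSeq

lemma genN_biUnion {Γ : Type*} {ι : Type*} {𝓑 : Set (Set Γ)} (f : ι → Set Γ) (c : ι → ℕ)
    (s : Finset ι) (hne : s.Nonempty) (h : ∀ i ∈ s, GenN 𝓑 (f i) (c i)) :
    GenN 𝓑 (⋃ i ∈ s, f i) (∑ i ∈ s, c i) := by
  classical
  induction s using Finset.induction_on with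
  | empty => exact absurd hne (by simp)
  | @insert a s ha ih =>
      rcases s.eq_empty_or_nonempty with rfl | hs
      · rw [Finset.set_biUnion_insert, Finset.sum_insert ha]
        simpa using h a (Finset.mem_insert_self a ∅)
      · rw [Finset.set_biUnion_insert, Finset.sum_insert ha]
        exact GenN.union (h a (Finset.mem_insert_self a s))
          (ih hs fun i hi => h i (Finset.mem_insert_of_mem hi))

lemma genN_seq {Γ : Type*} {𝓑 : Set (Set Γ)} {A : Set Γ} {k : ℕ} (h : GenN 𝓑 A k) :
    ∃ (T : ℕ) (seq : ℕ → Set Γ) (ops : ℕ → Bool), 0 < T ∧ StepOKN 𝓑 T seq ops ∧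
      seq (T - 1) = A ∧ ((Finset.range T).filter fun i => ops i = true).card ≤ k := by
  classical
  induction h with
  | @base B hB =>
      exact ⟨1, fun _ => B, fun _ => false, one_pos,
        fun i hi => ⟨B, B, Or.inl hB, Or.inl hB, by simp⟩, rfl, by simp⟩
  | @union X Y k l hX hY ihX ihY =>
      obtain ⟨T1, s1, o1, hT1, hs1, hl1, hc1⟩ := ihX
      obtain ⟨T2, s2, o2, hT2, hs2, hl2, hc2⟩ := ihY
      obtain ⟨T, sq, op, hT, hst, hlst, hcd⟩ := seq_combine false hT1 hT2 hs1 hs2 hl1 hl2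
      refine ⟨T, sq, op, hT, hst, by simpa using hlst, by rw [hcd]; simp; omega⟩
  | @inter X Y k l hX hY ihX ihY =>
      obtain ⟨T1, s1, o1, hT1, hs1, hl1, hc1⟩ := ihX
      obtain ⟨T2, s2, o2, hT2, hs2, hl2, hc2⟩ := ihY
      obtain ⟨T, sq, op, hT, hst, hlst, hcd⟩ := seq_combine true hT1 hT2 hs1 hs2 hl1 hl2
      refine ⟨T, sq, op, hT, hst, by simpa using hlst, by rw [hcd]; simp; omega⟩

lemma Dcap_le_genN {Γ : Type*} {𝓑 : Set (Set Γ)} {A : Set Γ} {k : ℕ} (h : GenN 𝓑 A k) :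
    Dcap A 𝓑 ≤ (k : ℕ∞) := by
  classical
  obtain ⟨T, seq, ops, hT, hstep, hlast, hcard⟩ := genN_seq h
  set t := T - 1 with ht
  have hT' : t + 1 = T := by omega
  set seqF : Fin (t + 1) → Set Γ := fun i => seq i with hseqF
  set opsF : Fin (t + 1) → Bool := fun i => ops i with hopsF
  have hstepF : StepOK 𝓑 seqF opsF := by
    intro i
    obtain ⟨X, Y, hX, hY, heq⟩ := hstep i (by omega)
    refine ⟨X, Y, ?_, ?_, heq⟩
    · rcases hX with hb | ⟨j, hj, rfl⟩
      · exact Or.inl hb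
      · exact Or.inr ⟨⟨j, by omega⟩, by simpa [Fin.lt_def] using hj, rfl⟩
    · rcases hY with hb | ⟨j, hj, rfl⟩
      · exact Or.inl hb
      · exact Or.inr ⟨⟨j, by omega⟩, by simpa [Fin.lt_def] using hj, rfl⟩
  have hlastF : seqF (Fin.last t) = A := by
    show seq t = A
    rw [ht]; exact hlast
  have hic : interCount opsF ≤ k := by
    have : interCount opsF = ((Finset.range (t + 1)).filter fun i => ops i = true).card := by
      rw [interCount, Finset.card_filter, Finset.card_filter]
      exact Fin.sum_univ_eq_sum_range (fun j => if ops j = true then 1 else 0) (t + 1)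
    rw [this, hT']
    exact hcard
  calc Dcap A 𝓑 ≤ ((interCount opsF : ℕ) : ℕ∞) :=
        sInf_le ⟨t, seqF, opsF, hstepF, hlastF, rfl⟩
    _ ≤ (k : ℕ∞) := by exact_mod_cast hic

lemma rho_le_Dcap {Γ : Type*} (A : Set Γ) (𝓑 : Set (Set Γ)) : rho A 𝓑 ≤ Dcap A 𝓑 := by
  classical
  refine le_sInf ?_
  rintro m ⟨t, seq, ops, hstep, hlast, rfl⟩
  choose X Y hX hY hseq using hstep
  set Λ : Finset (Set Γ × Set Γ) :=
    (Finset.univ.filter fun i => ops i = true).image fun i => (X i ∩ Aᶜ, Y i ∩ Aᶜ) with hΛ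
  have hcov : Covers A 𝓑 Λ := by
    constructor
    · intro p hp
      simp only [hΛ, Finset.mem_image] at hp
      obtain ⟨i, -, rfl⟩ := hp
      exact ⟨Set.inter_subset_right, Set.inter_subset_right⟩
    · rintro ⟨F, a, ⟨hFne, hFsub, hFup, hFemp⟩, haA, hab, hpres⟩
      have key : ∀ m : ℕ, ∀ i : Fin (t + 1), (i : ℕ) = m → a ∈ seq i → seq i ∩ Aᶜ ∈ F := by
        intro m
        induction m using Nat.strong_induction_on with
        | _ m ih =>
          intro i him hai
          have harg : ∀ Z : Set Γ, (Z ∈ 𝓑 ∨ ∃ j, j < i ∧ Z = seq j) → a ∈ Z → Z ∩ Aᶜ ∈ F := by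
            rintro Z (hb | ⟨j, hj, rfl⟩) haZ
            · exact hab Z hb haZ
            · exact ih j (by rw [← him]; exact hj) j rfl haZ
          by_cases hop : ops i = true
          · have hseqi := hseq i
            rw [if_pos hop] at hseqi
            have haX : a ∈ X i := by rw [hseqi] at hai; exact hai.1
            have haY : a ∈ Y i := by rw [hseqi] at hai; exact hai.2
            have hmem : (X i ∩ Aᶜ, Y i ∩ Aᶜ) ∈ Λ := by
              simp only [hΛ, Finset.mem_image]
              exact ⟨i, by simp [hop], rfl⟩
            have hres := hpres _ hmem (harg _ (hX i) haX) (harg _ (hY i) haY)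
            rw [hseqi]
            have : (X i ∩ Aᶜ, Y i ∩ Aᶜ).1 ∩ (X i ∩ Aᶜ, Y i ∩ Aᶜ).2 = X i ∩ Y i ∩ Aᶜ := by
              ext x
              simp only [Set.mem_inter_iff]
              tauto
            rwa [this] at hres
          · have hseqi := hseq i
            rw [if_neg hop] at hseqi
            rw [hseqi] at hai ⊢
            rcases hai with haZ | haZ
            · exact hFup _ (harg _ (hX i) haZ) _
                (Set.inter_subset_inter_left _ Set.subset_union_left) Set.inter_subset_right
            · exact hFup _ (harg _ (hY i) haZ) _
                (Set.inter_subset_inter_left _ Set.subset_union_right) Set.inter_subset_right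
      have hfin : A ∩ Aᶜ ∈ F := by
        have := key (Fin.last t) (Fin.last t) rfl (by rw [hlast]; exact haA)
        rwa [hlast] at this
      rw [Set.inter_compl_self] at hfin
      exact hFemp hfin
  calc rho A 𝓑 ≤ ((Λ.card : ℕ) : ℕ∞) := sInf_le ⟨Λ, hcov, rfl⟩
    _ ≤ ((interCount ops : ℕ) : ℕ∞) := by exact_mod_cast Finset.card_image_le

lemma rhoCan_le_rho (N : ℕ) (G : Set (Fin N × Fin N)) :
    rhoCan N G ≤ rho G (graphGens N N) := by
  refine le_sInf ?_
  rintro m ⟨Λ, ⟨hsub, hno⟩, rfl⟩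
  refine sInf_le ⟨Λ, hsub, ?_, rfl⟩
  intro e he hsf
  by_contra h
  push_neg at h
  refine hno ⟨canonFam N G e, e, hsf, he, ?_, h⟩
  intro B hB heB
  rcases hB with ⟨i, rfl⟩ | ⟨j, rfl⟩
  · have hei : e.1 = i := heB
    exact ⟨Set.inter_subset_right, Or.inl (by rw [hei])⟩
  · have hej : e.2 = j := heB
    exact ⟨Set.inter_subset_right, Or.inr (by rw [hej])⟩

section NEQ

lemma rowSet_inter_diag (N : ℕ) (u : Fin N) :
    rowSet N N u ∩ ({p : Fin N × Fin N | p.1 ≠ p.2})ᶜ = {((u, u) : Fin N × Fin N)} := by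
  ext ⟨a, b⟩
  simp only [rowSet, Set.mem_inter_iff, Set.mem_setOf_eq, Set.mem_compl_iff, not_not,
    Set.mem_singleton_iff, Prod.mk.injEq]
  constructor
  · rintro ⟨rfl, rfl⟩; exact ⟨rfl, rfl⟩
  · rintro ⟨rfl, rfl⟩; exact ⟨rfl, rfl⟩

lemma colSet_inter_diag (N : ℕ) (v : Fin N) :
    colSet N N v ∩ ({p : Fin N × Fin N | p.1 ≠ p.2})ᶜ = {((v, v) : Fin N × Fin N)} := by
  ext ⟨a, b⟩
  simp only [colSet, Set.mem_inter_iff, Set.mem_setOf_eq, Set.mem_compl_iff, not_not,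
    Set.mem_singleton_iff, Prod.mk.injEq]
  constructor
  · rintro ⟨rfl, rfl⟩; exact ⟨rfl, rfl⟩
  · rintro ⟨rfl, rfl⟩; exact ⟨rfl, rfl⟩

lemma semiFilter_canon_NEQ (N : ℕ) (e : Fin N × Fin N) :
    SemiFilter ({p : Fin N × Fin N | p.1 ≠ p.2})ᶜ
      (canonFam N {p : Fin N × Fin N | p.1 ≠ p.2} e) := by
  set G : Set (Fin N × Fin N) := {p | p.1 ≠ p.2} with hG
  refine ⟨⟨Gᶜ, subset_rfl, Or.inl Set.inter_subset_right⟩, fun S hS => hS.1, ?_, ?_⟩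
  · rintro S ⟨hS1, hS2⟩ T hST hT
    exact ⟨hT, hS2.imp (fun h => h.trans hST) (fun h => h.trans hST)⟩
  · rintro ⟨h1, h2 | h2⟩
    · have : ((e.1, e.1) : Fin N × Fin N) ∈ rowSet N N e.1 ∩ Gᶜ :=
        ⟨rfl, by simp [hG, Set.mem_compl_iff]⟩
      exact (h2 this).elim
    · have : ((e.2, e.2) : Fin N × Fin N) ∈ colSet N N e.2 ∩ Gᶜ :=
        ⟨rfl, by simp [hG, Set.mem_compl_iff]⟩
      exact (h2 this).elim

lemma n_le_rhoCan (n : ℕ) :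
    (n : ℕ∞) ≤ rhoCan (2 ^ n) {p : Fin (2 ^ n) × Fin (2 ^ n) | p.1 ≠ p.2} := by
  classical
  refine le_sInf ?_
  rintro m ⟨Λ, hsub, hfail, rfl⟩
  have hinj : Function.Injective
      (fun (w : Fin (2 ^ n)) => fun (p : Λ) => decide ((w, w) ∈ (p : Set (Fin (2 ^ n) × Fin (2 ^ n)) × Set (Fin (2 ^ n) × Fin (2 ^ n))).1 ∧ (w, w) ∉ (p : Set (Fin (2 ^ n) × Fin (2 ^ n)) × Set (Fin (2 ^ n) × Fin (2 ^ n))).2)) := by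
    intro u v huv
    by_contra hne
    have heG : ((u, v) : Fin (2 ^ n) × Fin (2 ^ n)) ∈ {p : Fin (2 ^ n) × Fin (2 ^ n) | p.1 ≠ p.2} := hne
    obtain ⟨p, hpΛ, hnp⟩ := hfail (u, v) heG (semiFilter_canon_NEQ (2 ^ n) (u, v))
    rw [PreservesPair] at hnp
    push_neg at hnp
    obtain ⟨hE, hH, hEH⟩ := hnp
    rw [canonFam] at hE hH
    simp only [Set.mem_setOf_eq, rowSet_inter_diag, colSet_inter_diag,
      Set.singleton_subset_iff] at hE hH
    have hEHsub : p.1 ∩ p.2 ⊆ ({p : Fin (2 ^ n) × Fin (2 ^ n) | p.1 ≠ p.2})ᶜ := Set.inter_subset_left.trans (hsub p hpΛ).1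
    have hEH' : ¬(((u, u) : Fin (2 ^ n) × Fin (2 ^ n)) ∈ p.1 ∩ p.2 ∨ ((v, v) : Fin (2 ^ n) × Fin (2 ^ n)) ∈ p.1 ∩ p.2) := by
      intro hc
      apply hEH
      rw [canonFam]
      simp only [Set.mem_setOf_eq, rowSet_inter_diag, colSet_inter_diag,
        Set.singleton_subset_iff]
      exact ⟨hEHsub, hc⟩
    have hcf := congrFun huv ⟨p, hpΛ⟩
    simp only [decide_eq_decide] at hcf
    simp only [Set.mem_inter_iff] at hEH'
    push_neg at hEH'
    tauto
  have hcard := Fintype.card_le_of_injective _ hinj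
  simp only [Fintype.card_fin, Fintype.card_fun, Fintype.card_coe, Fintype.card_bool] at hcard
  have hle : n ≤ Λ.card := by
    by_contra hlt
    push_neg at hlt
    have : (2 : ℕ) ^ Λ.card < 2 ^ n := Nat.pow_lt_pow_right (by norm_num) hlt
    omega
  exact_mod_cast hle

lemma genN_rowpart (n j : ℕ) (hj : j < n) (b : Bool) :
    GenN (graphGens (2 ^ n) (2 ^ n)) {p : Fin (2 ^ n) × Fin (2 ^ n) | (p.1 : ℕ).testBit j = b} 0 := by
  classical
  have heq : {p : Fin (2 ^ n) × Fin (2 ^ n) | (p.1 : ℕ).testBit j = b} =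
      ⋃ u ∈ Finset.univ.filter (fun u : Fin (2 ^ n) => (u : ℕ).testBit j = b),
        rowSet (2 ^ n) (2 ^ n) u := by
    ext p
    simp only [Set.mem_setOf_eq, Set.mem_iUnion, Finset.mem_filter, Finset.mem_univ, true_and,
      exists_prop]
    constructor
    · intro h; exact ⟨p.1, h, rfl⟩
    · rintro ⟨u, hu, h⟩
      have : p.1 = u := h
      rw [this]; exact hu
  rw [heq]
  have hne : (Finset.univ.filter (fun u : Fin (2 ^ n) => (u : ℕ).testBit j = b)).Nonempty := by
    cases b with
    | false =>
        refine ⟨⟨0, Nat.two_pow_pos n⟩, ?_⟩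
        simp [Nat.zero_testBit]
    | true =>
        refine ⟨⟨2 ^ j, Nat.pow_lt_pow_right (by norm_num) hj⟩, ?_⟩
        simp [Nat.testBit_two_pow]
  have := genN_biUnion (𝓑 := graphGens (2 ^ n) (2 ^ n)) (rowSet (2 ^ n) (2 ^ n)) (fun _ => 0) _ hne
    (fun i _ => GenN.base (show rowSet (2 ^ n) (2 ^ n) i ∈ graphGens (2 ^ n) (2 ^ n) from Set.mem_union_left _ (Set.mem_range_self i)))
  simpa using this

lemma genN_colpart (n j : ℕ) (hj : j < n) (b : Bool) :
    GenN (graphGens (2 ^ n) (2 ^ n)) {p : Fin (2 ^ n) × Fin (2 ^ n) | (p.2 : ℕ).testBit j = b} 0 := by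
  classical
  have heq : {p : Fin (2 ^ n) × Fin (2 ^ n) | (p.2 : ℕ).testBit j = b} =
      ⋃ u ∈ Finset.univ.filter (fun u : Fin (2 ^ n) => (u : ℕ).testBit j = b),
        colSet (2 ^ n) (2 ^ n) u := by
    ext p
    simp only [Set.mem_setOf_eq, Set.mem_iUnion, Finset.mem_filter, Finset.mem_univ, true_and,
      exists_prop]
    constructor
    · intro h; exact ⟨p.2, h, rfl⟩
    · rintro ⟨u, hu, h⟩
      have : p.2 = u := h
      rw [this]; exact hu
  rw [heq]
  have hne : (Finset.univ.filter (fun u : Fin (2 ^ n) => (u : ℕ).testBit j = b)).Nonempty := by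
    cases b with
    | false =>
        refine ⟨⟨0, Nat.two_pow_pos n⟩, ?_⟩
        simp [Nat.zero_testBit]
    | true =>
        refine ⟨⟨2 ^ j, Nat.pow_lt_pow_right (by norm_num) hj⟩, ?_⟩
        simp [Nat.testBit_two_pow]
  have := genN_biUnion (𝓑 := graphGens (2 ^ n) (2 ^ n)) (colSet (2 ^ n) (2 ^ n)) (fun _ => 0) _ hne
    (fun i _ => GenN.base (show colSet (2 ^ n) (2 ^ n) i ∈ graphGens (2 ^ n) (2 ^ n) from Set.mem_union_right _ (Set.mem_range_self i)))
  simpa using this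

lemma genN_NEQ (n : ℕ) (hn : 1 ≤ n) :
    GenN (graphGens (2 ^ n) (2 ^ n)) {p : Fin (2 ^ n) × Fin (2 ^ n) | p.1 ≠ p.2} n := by
  classical
  have hX : ∀ j ∈ Finset.range n, GenN (graphGens (2 ^ n) (2 ^ n))
      (({p : Fin (2 ^ n) × Fin (2 ^ n) | (p.1 : ℕ).testBit j = true} ∪
        {p : Fin (2 ^ n) × Fin (2 ^ n) | (p.2 : ℕ).testBit j = true}) ∩
       ({p : Fin (2 ^ n) × Fin (2 ^ n) | (p.1 : ℕ).testBit j = false} ∪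
        {p : Fin (2 ^ n) × Fin (2 ^ n) | (p.2 : ℕ).testBit j = false})) ((fun _ => 1) j) := by
    intro j hj
    rw [Finset.mem_range] at hj
    exact GenN.inter
      (GenN.union (genN_rowpart n j hj true) (genN_colpart n j hj true))
      (GenN.union (genN_rowpart n j hj false) (genN_colpart n j hj false))
  have heq : {p : Fin (2 ^ n) × Fin (2 ^ n) | p.1 ≠ p.2} =
      ⋃ j ∈ Finset.range n,
      (({p : Fin (2 ^ n) × Fin (2 ^ n) | (p.1 : ℕ).testBit j = true} ∪
        {p : Fin (2 ^ n) × Fin (2 ^ n) | (p.2 : ℕ).testBit j = true}) ∩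
       ({p : Fin (2 ^ n) × Fin (2 ^ n) | (p.1 : ℕ).testBit j = false} ∪
        {p : Fin (2 ^ n) × Fin (2 ^ n) | (p.2 : ℕ).testBit j = false})) := by
    ext ⟨u, v⟩
    simp only [Set.mem_setOf_eq, Set.mem_iUnion, Finset.mem_range, Set.mem_inter_iff,
      Set.mem_union, exists_prop]
    constructor
    · intro huv
      by_contra hc
      push_neg at hc
      apply huv
      have hbit : ∀ j, (u : ℕ).testBit j = (v : ℕ).testBit j := by
        intro j
        rcases lt_or_ge j n with hj | hj
        · have hcj := hc j hj
          cases hu : (u : ℕ).testBit j <;> cases hv : (v : ℕ).testBit j <;> simp_all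
        · rw [Nat.testBit_lt_two_pow, Nat.testBit_lt_two_pow]
          · exact lt_of_lt_of_le v.isLt (Nat.pow_le_pow_right (by norm_num) hj)
          · exact lt_of_lt_of_le u.isLt (Nat.pow_le_pow_right (by norm_num) hj)
      exact Fin.ext (Nat.eq_of_testBit_eq hbit)
    · rintro ⟨j, hj, h1, h2⟩ hne
      cases hne
      rcases h1 with h1 | h1 <;> rcases h2 with h2 | h2 <;> simp_all
  rw [heq]
  have := genN_biUnion (fun j =>
      (({p : Fin (2 ^ n) × Fin (2 ^ n) | (p.1 : ℕ).testBit j = true} ∪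
        {p : Fin (2 ^ n) × Fin (2 ^ n) | (p.2 : ℕ).testBit j = true}) ∩
       ({p : Fin (2 ^ n) × Fin (2 ^ n) | (p.1 : ℕ).testBit j = false} ∪
        {p : Fin (2 ^ n) × Fin (2 ^ n) | (p.2 : ℕ).testBit j = false})))
    (fun _ => 1) (Finset.range n) (by simp; omega) hX
  simpa using this

end NEQ

/-- Tight bounds for `G_NEQ`: for `N = 2^n` with `n ≥ 1` and
`G_NEQ = {(u, v) : u ≠ v}`,
`ρ_can(G_NEQ, 𝓖_{N,N}) = ρ(G_NEQ, 𝓖_{N,N}) = D_∩(G_NEQ | 𝓖_{N,N}) = n`. -/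
theorem NEQ_tight_bounds (n : ℕ) (hn : 1 ≤ n) :
    rhoCan (2 ^ n) {p : Fin (2 ^ n) × Fin (2 ^ n) | p.1 ≠ p.2} = (n : ℕ∞) ∧
    rho {p : Fin (2 ^ n) × Fin (2 ^ n) | p.1 ≠ p.2} (graphGens (2 ^ n) (2 ^ n)) = (n : ℕ∞) ∧
    Dcap {p : Fin (2 ^ n) × Fin (2 ^ n) | p.1 ≠ p.2} (graphGens (2 ^ n) (2 ^ n)) = (n : ℕ∞) := by
  have hG3 := Dcap_le_genN (genN_NEQ n hn)
  have h1 := rhoCan_le_rho (2 ^ n) {p : Fin (2 ^ n) × Fin (2 ^ n) | p.1 ≠ p.2}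
  have h2 := rho_le_Dcap {p : Fin (2 ^ n) × Fin (2 ^ n) | p.1 ≠ p.2} (graphGens (2 ^ n) (2 ^ n))
  have h4 := n_le_rhoCan n
  refine ⟨le_antisymm (h1.trans (h2.trans hG3)) h4,
    le_antisymm (h2.trans hG3) (h4.trans h1),
    le_antisymm hG3 (h4.trans (h1.trans h2))⟩
end
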